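/- arXiv:2103.10684 — 6 statements merged into one kernel-verified Lean document; each statement's English description precedes it below -/
import Mathlib

section
/- For every ε > 0 there exists t₀ such that for every t ≥ t₀ there is a finite simple graph G that admits no K_t-minor but admits a frozen proper ⌈(3/2-ε)t⌉-colouring. -/
set_option maxRecDepth 2000

/-- `B` is a family of bags witnessing a `K_t`-minor of `G`. -/
def IsKMinorBags {V : Type*} (G : SimpleGraph V) {t : ℕ} (B : Fin t → Set V) : Prop :=
  (∀ i, (B i).Nonempty) ∧
  (Pairwise fun i j => Disjoint (B i) (B j)) ∧
  (∀ i, (G.induce (B i)).Connected) ∧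
  (∀ i j, i ≠ j → ∃ u ∈ B i, ∃ v ∈ B j, G.Adj u v)

/-- `G` admits a `K_t`-minor. -/
def HasKMinor {V : Type*} (G : SimpleGraph V) (t : ℕ) : Prop :=
  ∃ B : Fin t → Set V, IsKMinorBags G B

/-- `α` is a proper colouring of `G` with colours in `Fin k`. -/
def IsProperColoring {V : Type*} (G : SimpleGraph V) {k : ℕ} (α : V → Fin k) : Prop :=
  ∀ u v, G.Adj u v → α u ≠ α v

/-- A colouring is frozen if every colour class is nonempty and the union of any two
distinct colour classes induces a connected subgraph of `G`. -/
def IsFrozen {V : Type*} (G : SimpleGraph V) {k : ℕ} (α : V → Fin k) : Prop :=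
  (∀ c : Fin k, {v | α v = c}.Nonempty) ∧
  (∀ c₁ c₂ : Fin k, c₁ ≠ c₂ → (G.induce {v | α v = c₁ ∨ α v = c₂}).Connected)

namespace FWAux

lemma fin2_cases : ∀ a b : Fin 2, a = b ∨ a = b + 1 := by decide

lemma fin2_succ_ne : ∀ a : Fin 2, a + 1 ≠ a := by decide

attribute [local instance] Classical.propDecidable

/-- patterns: a pair of sides -/
abbrev Pat : Type := Fin 2 × Fin 2

/-- vertex type: `k` parts of size 2 -/
abbrev Vtx (k : ℕ) : Type := Fin k × Fin 2

/-- coordinates: ordered pairs of parts -/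
abbrev CP (k : ℕ) : Type := {p : Fin k × Fin k // p.1 < p.2}

/-- a choice of one removed cross edge per pair of parts -/
abbrev Choice (k : ℕ) : Type := CP k → Pat

variable {k : ℕ}

def adjP (f : Choice k) (u v : Vtx k) : Prop :=
  if h : u.1 < v.1 then f ⟨(u.1, v.1), h⟩ ≠ (u.2, v.2)
  else if h' : v.1 < u.1 then f ⟨(v.1, u.1), h'⟩ ≠ (v.2, u.2)
  else False

/-- The graph: cocktail party graph on `k` parts minus one cross edge per pair of parts. -/
def Gf (f : Choice k) : SimpleGraph (Vtx k) where
  Adj := adjP f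
  symm := by
    refine ⟨?_⟩
    intro u v h
    unfold adjP at *
    rcases lt_trichotomy u.1 v.1 with hlt | heq | hgt
    · rw [dif_pos hlt] at h
      rw [dif_neg (by omega : ¬ v.1 < u.1), dif_pos hlt]
      exact h
    · rw [dif_neg (by omega : ¬ u.1 < v.1), dif_neg (by omega : ¬ v.1 < u.1)] at h
      exact h.elim
    · rw [dif_neg (by omega : ¬ u.1 < v.1), dif_pos hgt] at h
      rw [dif_pos hgt]
      exact h
  loopless := by
    refine ⟨?_⟩
    intro u h
    unfold adjP at h
    rw [dif_neg (lt_irrefl _), dif_neg (lt_irrefl _)] at h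
    exact h

lemma adj_ne_part {f : Choice k} {u v : Vtx k} (h : (Gf f).Adj u v) : u.1 ≠ v.1 := by
  intro he
  have : adjP f u v := h
  unfold adjP at this
  rw [dif_neg (by omega : ¬ u.1 < v.1), dif_neg (by omega : ¬ v.1 < u.1)] at this
  exact this

lemma adj_iff_lt {f : Choice k} {u v : Vtx k} (h : u.1 < v.1) :
    (Gf f).Adj u v ↔ f ⟨(u.1, v.1), h⟩ ≠ (u.2, v.2) := by
  show adjP f u v ↔ _
  unfold adjP
  rw [dif_pos h]


/-- The union of two colour classes induces a connected subgraph (it contains a `P₄`). -/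
lemma union_conn_lt (f : Choice k) {c₁ c₂ : Fin k} (hlt : c₁ < c₂) :
    ((Gf f).induce {v : Vtx k | v.1 = c₁ ∨ v.1 = c₂}).Connected := by
  rcases hfx : f ⟨(c₁, c₂), hlt⟩ with ⟨x, y⟩
  have hadj : ∀ s u : Fin 2, (s, u) ≠ (x, y) → (Gf f).Adj (c₁, s) (c₂, u) := by
    intro s u hne
    rw [adj_iff_lt (show (c₁, s).1 < (c₂, u).1 from hlt)]
    intro hc
    apply hne
    have h2 : f ⟨(c₁, c₂), hlt⟩ = (s, u) := hc
    rw [hfx] at h2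
    exact h2.symm
  have hA1 : ∀ s : Fin 2, (Gf f).Adj (c₁, s) (c₂, y + 1) := fun s =>
    hadj s (y + 1) (fun hc => fin2_succ_ne y (congrArg Prod.snd hc))
  have hA2 : (Gf f).Adj (c₁, x + 1) (c₂, y) :=
    hadj (x + 1) y (fun hc => fin2_succ_ne x (congrArg Prod.fst hc))
  have hadj' : ∀ (u v : {v : Vtx k | v.1 = c₁ ∨ v.1 = c₂}), (Gf f).Adj u.val v.val →
      ((Gf f).induce {v : Vtx k | v.1 = c₁ ∨ v.1 = c₂}).Adj u v := by
    intro u v h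
    exact h
  have hreach : ∀ w : {v : Vtx k | v.1 = c₁ ∨ v.1 = c₂},
      ((Gf f).induce {v : Vtx k | v.1 = c₁ ∨ v.1 = c₂}).Reachable w ⟨(c₂, y + 1), Or.inr rfl⟩ := by
    rintro ⟨⟨p, s⟩, hw⟩
    have hw' : p = c₁ ∨ p = c₂ := hw
    rcases hw' with rfl | rfl
    · exact (hadj' ⟨(p, s), Or.inl rfl⟩ _ (hA1 s)).reachable
    · rcases fin2_cases s y with h | h
      · cases h
        have r1 := (hadj' ⟨(p, y), Or.inr rfl⟩ ⟨(c₁, x + 1), Or.inl rfl⟩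
          hA2.symm).reachable
        have r2 := (hadj' ⟨(c₁, x + 1), Or.inl rfl⟩ ⟨(p, y + 1), Or.inr rfl⟩
          (hA1 (x + 1))).reachable
        exact r1.trans r2
      · cases h
        exact SimpleGraph.Reachable.refl _
  rw [SimpleGraph.connected_iff]
  exact ⟨fun u v => (hreach u).trans (hreach v).symm, ⟨⟨(c₂, y + 1), Or.inr rfl⟩⟩⟩

lemma union_conn (f : Choice k) {c₁ c₂ : Fin k} (h : c₁ ≠ c₂) :
    ((Gf f).induce {v : Vtx k | v.1 = c₁ ∨ v.1 = c₂}).Connected := by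
  rcases h.lt_or_gt with hlt | hlt
  · exact union_conn_lt f hlt
  · have : {v : Vtx k | v.1 = c₁ ∨ v.1 = c₂} = {v : Vtx k | v.1 = c₂ ∨ v.1 = c₁} := by
      ext v; exact or_comm
    rw [this]
    exact union_conn_lt f hlt

/-! ### Tokens, extraction, and the minor bound -/

def TokOK (s : Finset (Vtx k)) : Prop :=
  s.Nonempty ∧ s.card ≤ 2 ∧ (s.image Prod.fst).card = s.card

def PD (s t : Finset (Vtx k)) : Prop :=
  Disjoint (s.image Prod.fst) (t.image Prod.fst)

def AdjT (f : Choice k) (s t : Finset (Vtx k)) : Prop :=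
  ∃ u ∈ s, ∃ v ∈ t, (Gf f).Adj u v

/-- `f` is good if every part-disjoint pairwise-adjacent family of tokens has `< m` members. -/
def GoodF (f : Choice k) (m : ℕ) : Prop :=
  ∀ F : Finset (Finset (Vtx k)), (∀ s ∈ F, TokOK s) →
    ((F : Set (Finset (Vtx k))).Pairwise PD) →
    ((F : Set (Finset (Vtx k))).Pairwise (AdjT f)) → F.card < m

lemma fin2_three (s1 s2 s3 : Fin 2) (h12 : s1 ≠ s2) (h13 : s1 ≠ s3) (h23 : s2 ≠ s3) : False := by
  revert h12 h13 h23; revert s1 s2 s3; decide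

lemma PD_symm : Symmetric (@PD k) := fun s t h => h.symm

/-- From a family of vertex-disjoint tokens one can extract a part-disjoint subfamily of
proportion at least one third. -/
lemma extract : ∀ (n : ℕ) (F : Finset (Finset (Vtx k))), F.card ≤ n →
    (∀ s ∈ F, s.Nonempty) → (∀ s ∈ F, (s.image Prod.fst).card ≤ 2) →
    ((F : Set (Finset (Vtx k))).Pairwise fun s t => Disjoint s t) →
    ∃ S ⊆ F, ((S : Set (Finset (Vtx k))).Pairwise PD) ∧ F.card ≤ 3 * S.card := by
  intro n
  induction n with
  | zero =>
    intro F hF _ _ _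
    exact ⟨∅, Finset.empty_subset F, by simp, by omega⟩
  | succ n ih =>
    intro F hFc hne hp2 hdisj
    rcases F.eq_empty_or_nonempty with rfl | ⟨a, ha⟩
    · exact ⟨∅, by simp, by simp, by simp⟩
    set bad := F.filter (fun b => b ≠ a ∧ ¬ PD b a) with hbad
    have hbadsub : bad ⊆ F := Finset.filter_subset _ _
    have hbadcard : bad.card ≤ 2 := by
      have h2a : (a.image Prod.fst).card ≤ 2 := hp2 a ha
      have key : ∀ b ∈ bad, ∃ p, p ∈ b.image Prod.fst ∧ p ∈ a.image Prod.fst := by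
        intro b hb
        rw [hbad, Finset.mem_filter] at hb
        exact Finset.not_disjoint_iff.mp hb.2.2
      choose w hw1 hw2 using key
      have hinj : bad.card ≤ (a.image Prod.fst).card := by
        apply Finset.card_le_card_of_injOn
          (fun b => if hb : b ∈ bad then w b hb else (hne a ha).choose.1)
        · intro b hb
          simp only [dif_pos hb]
          have hb' : b ∈ bad := by simpa using hb
          simp only [Finset.mem_coe, dif_pos hb']
          exact hw2 b hb'
        · intro b hb b' hb' heq
          simp only [Finset.mem_coe] at hb hb'
          simp only [dif_pos hb, dif_pos hb'] at heq
          by_contra hbb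
          -- get vertices with the common part
          obtain ⟨ub, hub, hubp⟩ := Finset.mem_image.mp (hw1 b hb)
          obtain ⟨ub', hub', hubp'⟩ := Finset.mem_image.mp (heq ▸ hw1 b' hb')
          obtain ⟨xa, hxa, hxap⟩ := Finset.mem_image.mp (hw2 b hb)
          have hbF : b ∈ F := hbadsub hb
          have hb'F : b' ∈ F := hbadsub hb'
          have hbna : b ≠ a := (Finset.mem_filter.mp hb).2.1
          have hb'na : b' ≠ a := (Finset.mem_filter.mp hb').2.1
          have d1 : Disjoint b b' := hdisj hbF hb'F hbb
          have d2 : Disjoint b a := hdisj hbF ha hbna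
          have d3 : Disjoint b' a := hdisj hb'F ha hb'na
          have hne1 : ub ≠ ub' := fun hh => (Finset.disjoint_left.mp d1 hub) (hh ▸ hub')
          have hne2 : ub ≠ xa := fun hh => (Finset.disjoint_left.mp d2 hub) (hh ▸ hxa)
          have hne3 : ub' ≠ xa := fun hh => (Finset.disjoint_left.mp d3 hub') (hh ▸ hxa)
          have hp1 : ub.1 = ub'.1 := by rw [hubp, hubp']
          have hp2' : ub.1 = xa.1 := by rw [hubp, hxap]
          have hs1 : ub.2 ≠ ub'.2 := fun hh => hne1 (Prod.ext hp1 hh)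
          have hs2 : ub.2 ≠ xa.2 := fun hh => hne2 (Prod.ext hp2' hh)
          have hs3 : ub'.2 ≠ xa.2 := fun hh => hne3 (Prod.ext (hp1 ▸ hp2') hh)
          exact fin2_three _ _ _ hs1 hs2 hs3
      omega
    set F' := (F.erase a) \ bad with hF'
    have hF'sub : F' ⊆ F := fun x hx =>
      F.erase_subset a (Finset.mem_sdiff.mp hx).1
    have hF'card : F'.card ≤ n := by
      have h1 : F' ⊆ F.erase a := Finset.sdiff_subset
      have h2 : F'.card ≤ (F.erase a).card := Finset.card_le_card h1
      have h3 : (F.erase a).card = F.card - 1 := Finset.card_erase_of_mem ha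
      have h4 : 1 ≤ F.card := Finset.card_pos.mpr ⟨a, ha⟩
      omega
    obtain ⟨S', hS'sub, hS'pd, hS'card⟩ := ih F' hF'card
      (fun s hs => hne s (hF'sub hs)) (fun s hs => hp2 s (hF'sub hs))
      (Set.Pairwise.mono (Finset.coe_subset.mpr hF'sub) hdisj)
    have haS' : a ∉ S' := by
      intro hcon
      have := hS'sub hcon
      rw [hF', Finset.mem_sdiff] at this
      exact (Finset.notMem_erase a F) this.1
    refine ⟨insert a S', ?_, ?_, ?_⟩
    · intro x hx
      rcases Finset.mem_insert.mp hx with rfl | hx'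
      · exact ha
      · exact hF'sub (hS'sub hx')
    · rw [Finset.coe_insert]
      haveI : Std.Symm (@PD k) := ⟨fun s t h => PD_symm h⟩
      rw [Set.pairwise_insert_of_symm]
      refine ⟨hS'pd, ?_⟩
      intro b hb hba
      have hbF' : b ∈ F' := hS'sub hb
      rw [hF', Finset.mem_sdiff] at hbF'
      have hbnotbad : b ∉ bad := hbF'.2
      rw [hbad, Finset.mem_filter] at hbnotbad
      push_neg at hbnotbad
      have : PD b a := hbnotbad (F.erase_subset a hbF'.1) (Ne.symm hba)
      exact PD_symm this
    · have hc1 : F.card ≤ F'.card + 3 := by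
        have h5 : (F.erase a).card ≤ F'.card + bad.card :=
          Finset.card_le_card_sdiff_add_card
        have h3 : (F.erase a).card = F.card - 1 := Finset.card_erase_of_mem ha
        have h4 : 1 ≤ F.card := Finset.card_pos.mpr ⟨a, ha⟩
        omega
      have hc2 : (insert a S').card = S'.card + 1 := Finset.card_insert_of_notMem haS'
      omega

/-- A connected two-element bag is an edge. -/
lemma conn_two_adj {f : Choice k} {B : Set (Vtx k)} (hc : ((Gf f).induce B).Connected)
    {u v : Vtx k} (hu : u ∈ B) (hv : v ∈ B) (huv : u ≠ v)
    (hall : ∀ w, w ∈ B → w = u ∨ w = v) : (Gf f).Adj u v := by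
  obtain ⟨p⟩ := hc.preconnected ⟨u, hu⟩ ⟨v, hv⟩
  have hne : (⟨u, hu⟩ : ↥B) ≠ ⟨v, hv⟩ := fun hh => huv (congrArg Subtype.val hh)
  have hnil : ¬ p.Nil := SimpleGraph.Walk.not_nil_of_ne hne
  have hadj1 := p.adj_snd hnil
  have hGadj : (Gf f).Adj u (p.getVert 1).val := hadj1
  rcases hall (p.getVert 1).val (p.getVert 1).2 with h1 | h1
  · rw [h1] at hGadj
    exact absurd hGadj ((Gf f).loopless.irrefl u)
  · rw [h1] at hGadj
    exact hGadj

/-- Main minor-freeness lemma: a good `f` yields no `K_t`-minor when `t` is large enough. -/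
lemma no_minor {f : Choice k} {m t : ℕ} (hgood : GoodF f m)
    (hineq : 2 * k + 6 * m < 3 * t + 6) : ¬ HasKMinor (Gf f) t := by
  rintro ⟨B, hBne, hBdisj, hBconn, hBadj⟩
  set Bf : Fin t → Finset (Vtx k) := fun i => (B i).toFinite.toFinset with hBfdef
  have hmem : ∀ i v, v ∈ Bf i ↔ v ∈ B i := fun i v => Set.Finite.mem_toFinset _
  have hBfne : ∀ i, (Bf i).Nonempty := by
    intro i
    obtain ⟨v, hv⟩ := hBne i
    exact ⟨v, (hmem i v).mpr hv⟩
  have hBfdisj : ∀ i j, i ≠ j → Disjoint (Bf i) (Bf j) := by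
    intro i j hij
    rw [Finset.disjoint_left]
    intro v hvi hvj
    exact Set.disjoint_left.mp (hBdisj hij) ((hmem i v).mp hvi) ((hmem j v).mp hvj)
  have hBfinj : Function.Injective Bf := by
    intro i j hij
    by_contra hne'
    obtain ⟨v, hv⟩ := hBfne i
    exact Finset.disjoint_left.mp (hBfdisj i j hne') hv (hij ▸ hv)
  have hsum : ∑ i, (Bf i).card ≤ 2 * k := by
    have h1 : (Finset.univ.biUnion Bf).card = ∑ i, (Bf i).card :=
      Finset.card_biUnion (fun i _ j _ hij => hBfdisj i j hij)
    have h2 : (Finset.univ.biUnion Bf).card ≤ Fintype.card (Vtx k) :=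
      Finset.card_le_univ _
    have h3 : Fintype.card (Vtx k) = 2 * k := by
      simp [Fintype.card_prod, Nat.mul_comm]
    omega
  set TI := Finset.univ.filter (fun i : Fin t => (Bf i).card ≤ 2) with hTI
  have hcount : 3 * t ≤ ∑ i, (Bf i).card + 2 * TI.card := by
    have hpt : ∀ i : Fin t, 3 ≤ (Bf i).card + (if (Bf i).card ≤ 2 then 2 else 0) := by
      intro i
      have h1 : 1 ≤ (Bf i).card := Finset.card_pos.mpr (hBfne i)
      by_cases h : (Bf i).card ≤ 2
      · rw [if_pos h]; omega
      · rw [if_neg h]; omega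
    have h2 : ∑ i : Fin t, (3 : ℕ) ≤ ∑ i, ((Bf i).card + (if (Bf i).card ≤ 2 then 2 else 0)) :=
      Finset.sum_le_sum (fun i _ => hpt i)
    rw [Finset.sum_const, Finset.card_univ, Fintype.card_fin, smul_eq_mul] at h2
    rw [Finset.sum_add_distrib] at h2
    have h3 : ∑ i : Fin t, (if (Bf i).card ≤ 2 then (2:ℕ) else 0) = 2 * TI.card := by
      rw [hTI, ← Finset.sum_filter, Finset.sum_const, smul_eq_mul]
      ring
    omega
  set Fam := TI.image Bf with hFam
  have hFamcard : Fam.card = TI.card := Finset.card_image_of_injective _ hBfinj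
  have hFamTok : ∀ s ∈ Fam, TokOK s := by
    intro s hs
    obtain ⟨i, hi, rfl⟩ := Finset.mem_image.mp hs
    have hle2 : (Bf i).card ≤ 2 := (Finset.mem_filter.mp hi).2
    refine ⟨hBfne i, hle2, ?_⟩
    have h1 : 1 ≤ (Bf i).card := Finset.card_pos.mpr (hBfne i)
    interval_cases h : (Bf i).card
    · obtain ⟨v, hv⟩ := Finset.card_eq_one.mp h
      rw [hv]
      simp
    · obtain ⟨u, v, huv, huvs⟩ := Finset.card_eq_two.mp h
      have hadj : (Gf f).Adj u v := by
        apply conn_two_adj (hBconn i) ((hmem i u).mp ?_) ((hmem i v).mp ?_) huv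
        · intro w hw
          have : w ∈ Bf i := (hmem i w).mpr hw
          rw [huvs] at this
          simpa using this
        · rw [huvs]; simp
        · rw [huvs]; simp
      have hne12 : u.1 ≠ v.1 := adj_ne_part hadj
      rw [huvs]
      rw [Finset.image_insert, Finset.image_singleton]
      rw [Finset.card_insert_of_notMem (by simpa using hne12)]
      simp
  have hFamdisj : (Fam : Set (Finset (Vtx k))).Pairwise fun s t => Disjoint s t := by
    intro s hs t ht hst
    obtain ⟨i, hi, rfl⟩ := Finset.mem_image.mp (Finset.mem_coe.mp hs)
    obtain ⟨j, hj, rfl⟩ := Finset.mem_image.mp (Finset.mem_coe.mp ht)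
    exact hBfdisj i j (fun hij => hst (hij ▸ rfl))
  have hFamadj : (Fam : Set (Finset (Vtx k))).Pairwise (AdjT f) := by
    intro s hs t ht hst
    obtain ⟨i, hi, rfl⟩ := Finset.mem_image.mp (Finset.mem_coe.mp hs)
    obtain ⟨j, hj, rfl⟩ := Finset.mem_image.mp (Finset.mem_coe.mp ht)
    obtain ⟨u, hu, v, hv, hadj⟩ := hBadj i j (fun hij => hst (hij ▸ rfl))
    exact ⟨u, (hmem i u).mpr hu, v, (hmem j v).mpr hv, hadj⟩
  obtain ⟨S, hSsub, hSpd, hScard⟩ := extract Fam.card Fam le_rfl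
    (fun s hs => (hFamTok s hs).1)
    (fun s hs => by
      have := (hFamTok s hs).2
      omega)
    hFamdisj
  have hSlt : S.card < m := by
    apply hgood S (fun s hs => hFamTok s (hSsub hs)) hSpd
    exact Set.Pairwise.mono (Finset.coe_subset.mpr hSsub) hFamadj
  omega

/-! ### Existence of a good choice function, by counting -/

section Counting

/-- Event index: pairs `(i, x)` with `x < i`, indexing unordered pairs of the family. -/
abbrev EvIdx (m : ℕ) : Type := (i : Fin m) × Fin i.val

variable {m : ℕ} (F : Finset (Finset (Vtx k))) (hm : F.card = m)

noncomputable def enum (i : Fin m) : Finset (Vtx k) :=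
  ((Finset.equivFinOfCardEq hm).symm i).val

lemma enum_mem (i : Fin m) : enum F hm i ∈ F :=
  ((Finset.equivFinOfCardEq hm).symm i).2

lemma enum_inj : Function.Injective (enum F hm) := by
  intro i j h
  exact (Finset.equivFinOfCardEq hm).symm.injective (Subtype.ext h)

def loIdx (σ : EvIdx m) : Fin m := ⟨σ.2.val, lt_trans σ.2.isLt σ.1.isLt⟩

noncomputable def eLo (σ : EvIdx m) : Finset (Vtx k) := enum F hm (loIdx σ)

noncomputable def eHi (σ : EvIdx m) : Finset (Vtx k) := enum F hm σ.1

lemma eLo_ne_eHi (σ : EvIdx m) : eLo F hm σ ≠ eHi F hm σ := by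
  intro h
  have h2 := congrArg Fin.val (enum_inj F hm h)
  have h3 : σ.2.val < σ.1.val := σ.2.isLt
  simp only [loIdx] at h2
  omega

noncomputable def cset (σ : EvIdx m) : Finset (CP k) :=
  Finset.univ.filter (fun X =>
    (X.val.1 ∈ (eLo F hm σ).image Prod.fst ∧ X.val.2 ∈ (eHi F hm σ).image Prod.fst) ∨
    (X.val.1 ∈ (eHi F hm σ).image Prod.fst ∧ X.val.2 ∈ (eLo F hm σ).image Prod.fst))

lemma card_pat : Nat.card Pat = 4 := by
  rw [Nat.card_eq_fintype_card]
  simp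

lemma part_unique (hFpd : (F : Set (Finset (Vtx k))).Pairwise PD) {s t : Finset (Vtx k)} (hs : s ∈ F) (ht : t ∈ F) {p : Fin k}
    (hps : p ∈ s.image Prod.fst) (hpt : p ∈ t.image Prod.fst) : s = t := by
  by_contra h
  exact Finset.disjoint_left.mp (hFpd (Finset.mem_coe.mpr hs) (Finset.mem_coe.mpr ht) h) hps hpt

lemma own_unique (hFtok : ∀ s ∈ F, TokOK s) (hFpd : (F : Set (Finset (Vtx k))).Pairwise PD) {s t : Finset (Vtx k)} (hs : s ∈ F) (ht : t ∈ F) {u w : Vtx k}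
    (hu : u ∈ s) (hw : w ∈ t) (hp : u.1 = w.1) : u = w := by
  have hst : s = t := part_unique F hFpd hs ht (Finset.mem_image_of_mem _ hu)
    (by rw [hp]; exact Finset.mem_image_of_mem _ hw)
  subst hst
  have hinj : Set.InjOn Prod.fst (s : Set (Vtx k)) := Finset.card_image_iff.mp (hFtok s hs).2.2
  exact hinj (Finset.mem_coe.mpr hu) (Finset.mem_coe.mpr hw) hp

lemma pts_disj (hFpd : (F : Set (Finset (Vtx k))).Pairwise PD) (σ : EvIdx m) :
    Disjoint ((eLo F hm σ).image Prod.fst) ((eHi F hm σ).image Prod.fst) :=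
  hFpd (Finset.mem_coe.mpr (enum_mem F hm _)) (Finset.mem_coe.mpr (enum_mem F hm _))
    (eLo_ne_eHi F hm σ)

lemma cset_card_le (hFtok : ∀ s ∈ F, TokOK s) (hFpd : (F : Set (Finset (Vtx k))).Pairwise PD) (σ : EvIdx m) : (cset F hm σ).card ≤ 4 := by
  have hd := pts_disj F hm hFpd σ
  have h1 : (cset F hm σ).card ≤
      (((eLo F hm σ).image Prod.fst) ×ˢ ((eHi F hm σ).image Prod.fst)).card := by
    apply Finset.card_le_card_of_injOn
      (fun X => if X.val.1 ∈ (eLo F hm σ).image Prod.fst then (X.val.1, X.val.2)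
        else (X.val.2, X.val.1))
    · intro X hX
      rw [cset, Finset.mem_coe, Finset.mem_filter] at hX
      rw [Finset.mem_coe]; beta_reduce
      rcases hX.2 with ⟨ha, hb⟩ | ⟨ha, hb⟩
      · rw [if_pos ha]
        exact Finset.mem_product.mpr ⟨ha, hb⟩
      · rw [if_neg (fun hc => Finset.disjoint_left.mp hd hc ha)]
        exact Finset.mem_product.mpr ⟨hb, ha⟩
    · intro X hX Y hY heq
      simp only at heq
      by_cases hXc : X.val.1 ∈ (eLo F hm σ).image Prod.fst <;>
        by_cases hYc : Y.val.1 ∈ (eLo F hm σ).image Prod.fst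
      · rw [if_pos hXc, if_pos hYc, Prod.mk.injEq] at heq
        exact Subtype.ext (Prod.ext heq.1 heq.2)
      · rw [if_pos hXc, if_neg hYc, Prod.mk.injEq] at heq
        exact absurd (heq.1 ▸ heq.2 ▸ Y.prop) (lt_asymm X.prop)
      · rw [if_neg hXc, if_pos hYc, Prod.mk.injEq] at heq
        exact absurd (heq.1 ▸ heq.2 ▸ Y.prop) (lt_asymm X.prop)
      · rw [if_neg hXc, if_neg hYc, Prod.mk.injEq] at heq
        exact Subtype.ext (Prod.ext heq.2 heq.1)
  have h2 : (((eLo F hm σ).image Prod.fst) ×ˢ ((eHi F hm σ).image Prod.fst)).card ≤ 4 := by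
    rw [Finset.card_product]
    have hlo : ((eLo F hm σ).image Prod.fst).card ≤ 2 := by
      have h := (hFtok _ (enum_mem F hm (loIdx σ))).2
      calc ((eLo F hm σ).image Prod.fst).card ≤ (eLo F hm σ).card := Finset.card_image_le
        _ ≤ 2 := h.1
    have hhi : ((eHi F hm σ).image Prod.fst).card ≤ 2 := by
      have h := (hFtok _ (enum_mem F hm σ.1)).2
      calc ((eHi F hm σ).image Prod.fst).card ≤ (eHi F hm σ).card := Finset.card_image_le
        _ ≤ 2 := h.1
    calc ((eLo F hm σ).image Prod.fst).card * ((eHi F hm σ).image Prod.fst).card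
        ≤ 2 * 2 := Nat.mul_le_mul hlo hhi
      _ = 4 := rfl
  omega

lemma coord_mem_lt {σ : EvIdx m} {u v : Vtx k} (hu : u ∈ eLo F hm σ) (hv : v ∈ eHi F hm σ)
    (h : u.1 < v.1) : (⟨(u.1, v.1), h⟩ : CP k) ∈ cset F hm σ := by
  rw [cset, Finset.mem_filter]
  exact ⟨Finset.mem_univ _,
    Or.inl ⟨Finset.mem_image_of_mem _ hu, Finset.mem_image_of_mem _ hv⟩⟩

lemma coord_mem_gt {σ : EvIdx m} {u v : Vtx k} (hu : u ∈ eLo F hm σ) (hv : v ∈ eHi F hm σ)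
    (h : v.1 < u.1) : (⟨(v.1, u.1), h⟩ : CP k) ∈ cset F hm σ := by
  rw [cset, Finset.mem_filter]
  exact ⟨Finset.mem_univ _,
    Or.inr ⟨Finset.mem_image_of_mem _ hv, Finset.mem_image_of_mem _ hu⟩⟩

lemma parts_ne (hFpd : (F : Set (Finset (Vtx k))).Pairwise PD) {σ : EvIdx m} {u v : Vtx k}
    (hu : u ∈ eLo F hm σ) (hv : v ∈ eHi F hm σ) : u.1 ≠ v.1 := by
  intro h
  have h1 : u.1 ∈ (eLo F hm σ).image Prod.fst := Finset.mem_image_of_mem _ hu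
  have h2 : u.1 ∈ (eHi F hm σ).image Prod.fst := by
    rw [h]; exact Finset.mem_image_of_mem _ hv
  exact Finset.disjoint_left.mp (pts_disj F hm hFpd σ) h1 h2

lemma adj_iff_gt {f : Choice k} {u v : Vtx k} (h : v.1 < u.1) :
    (Gf f).Adj u v ↔ f ⟨(v.1, u.1), h⟩ ≠ (v.2, u.2) := by
  show adjP f u v ↔ _
  unfold adjP
  rw [dif_neg (by omega : ¬ u.1 < v.1), dif_pos h]

lemma adjT_congr (hFpd : (F : Set (Finset (Vtx k))).Pairwise PD) {σ : EvIdx m} {f g : Choice k}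
    (hfg : ∀ X ∈ cset F hm σ, f X = g X) :
    AdjT f (eLo F hm σ) (eHi F hm σ) ↔ AdjT g (eLo F hm σ) (eHi F hm σ) := by
  have key : ∀ (f g : Choice k), (∀ X ∈ cset F hm σ, f X = g X) →
      ∀ u ∈ eLo F hm σ, ∀ v ∈ eHi F hm σ, (Gf f).Adj u v → (Gf g).Adj u v := by
    intro f g hfg u hu v hv hadj
    rcases lt_or_gt_of_ne (parts_ne F hm hFpd hu hv) with h | h
    · rw [adj_iff_lt h] at hadj ⊢
      rw [← hfg _ (coord_mem_lt F hm hu hv h)]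
      exact hadj
    · rw [adj_iff_gt h] at hadj ⊢
      rw [← hfg _ (coord_mem_gt F hm hu hv h)]
      exact hadj
  constructor
  · rintro ⟨u, hu, v, hv, hadj⟩
    exact ⟨u, hu, v, hv, key f g hfg u hu v hv hadj⟩
  · rintro ⟨u, hu, v, hv, hadj⟩
    exact ⟨u, hu, v, hv, key g f (fun X hX => (hfg X hX).symm) u hu v hv hadj⟩

noncomputable def sideOf (W : Finset (Vtx k)) (p : Fin k) : Fin 2 :=
  if h : ∃ s : Fin 2, (p, s) ∈ W then h.choose else 0

lemma sideOf_union (hFtok : ∀ s ∈ F, TokOK s) (hFpd : (F : Set (Finset (Vtx k))).Pairwise PD) {σ : EvIdx m} {u : Vtx k} (hu : u ∈ eLo F hm σ ∪ eHi F hm σ) :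
    sideOf (eLo F hm σ ∪ eHi F hm σ) u.1 = u.2 := by
  have hex : ∃ s : Fin 2, (u.1, s) ∈ eLo F hm σ ∪ eHi F hm σ := ⟨u.2, by simpa using hu⟩
  rw [sideOf, dif_pos hex]
  have hmem := hex.choose_spec
  have key : (u.1, hex.choose) = u := by
    have hin : ∀ w : Vtx k, w ∈ eLo F hm σ ∪ eHi F hm σ → ∃ s ∈ F, w ∈ s := by
      intro w hw
      rcases Finset.mem_union.mp hw with h | h
      · exact ⟨_, enum_mem F hm (loIdx σ), h⟩
      · exact ⟨_, enum_mem F hm σ.1, h⟩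
    obtain ⟨s, hsF, hws⟩ := hin _ hmem
    obtain ⟨t, htF, hut⟩ := hin _ hu
    exact own_unique F hFtok hFpd hsF htF hws hut rfl
  exact congrArg Prod.snd key

noncomputable def patch (c : Finset (CP k)) (h : ↥c → Pat) (g : Choice k) : Choice k :=
  fun X => if hX : X ∈ c then h ⟨X, hX⟩ else g X

noncomputable def g0 : Choice k := fun _ => (0, 0)

def Eloc (σ : EvIdx m) (h : ↥(cset F hm σ) → Pat) : Prop :=
  AdjT (patch (cset F hm σ) h g0) (eLo F hm σ) (eHi F hm σ)

noncomputable def hwit (σ : EvIdx m) : ↥(cset F hm σ) → Pat :=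
  fun X => (sideOf (eLo F hm σ ∪ eHi F hm σ) X.val.val.1,
    sideOf (eLo F hm σ ∪ eHi F hm σ) X.val.val.2)

lemma not_Eloc_hwit (hFtok : ∀ s ∈ F, TokOK s) (hFpd : (F : Set (Finset (Vtx k))).Pairwise PD) (σ : EvIdx m) : ¬ Eloc F hm σ (hwit F hm σ) := by
  rintro ⟨u, hu, v, hv, hadj⟩
  rcases lt_or_gt_of_ne (parts_ne F hm hFpd hu hv) with h | h
  · rw [adj_iff_lt h] at hadj
    apply hadj
    have hX := coord_mem_lt F hm hu hv h
    show patch (cset F hm σ) (hwit F hm σ) g0 _ = _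
    rw [patch]
    rw [dif_pos hX]
    show (sideOf (eLo F hm σ ∪ eHi F hm σ) u.1, sideOf (eLo F hm σ ∪ eHi F hm σ) v.1)
      = (u.2, v.2)
    rw [sideOf_union F hm hFtok hFpd (Finset.mem_union_left _ hu),
      sideOf_union F hm hFtok hFpd (Finset.mem_union_right _ hv)]
  · rw [adj_iff_gt h] at hadj
    apply hadj
    have hX := coord_mem_gt F hm hu hv h
    show patch (cset F hm σ) (hwit F hm σ) g0 _ = _
    rw [patch]
    rw [dif_pos hX]
    show (sideOf (eLo F hm σ ∪ eHi F hm σ) v.1, sideOf (eLo F hm σ ∪ eHi F hm σ) u.1)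
      = (v.2, u.2)
    rw [sideOf_union F hm hFtok hFpd (Finset.mem_union_right _ hv),
      sideOf_union F hm hFtok hFpd (Finset.mem_union_left _ hu)]

lemma count_Eloc (hFtok : ∀ s ∈ F, TokOK s) (hFpd : (F : Set (Finset (Vtx k))).Pairwise PD) (σ : EvIdx m) :
    Nat.card {h : ↥(cset F hm σ) → Pat // Eloc F hm σ h} ≤ 4 ^ (cset F hm σ).card - 1 := by
  have htot : Nat.card (↥(cset F hm σ) → Pat) = 4 ^ (cset F hm σ).card := by
    rw [Nat.card_fun, card_pat, Nat.card_eq_finsetCard]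
  have hsplit : Nat.card {h : ↥(cset F hm σ) → Pat // Eloc F hm σ h} +
      Nat.card {h : ↥(cset F hm σ) → Pat // ¬ Eloc F hm σ h} =
      Nat.card (↥(cset F hm σ) → Pat) := by
    rw [Nat.card_eq_fintype_card (α := {h // Eloc F hm σ h}),
      Nat.card_eq_fintype_card (α := {h // ¬ Eloc F hm σ h}),
      Nat.card_eq_fintype_card]
    rw [Fintype.card_subtype_compl]
    have hle : Fintype.card {h : ↥(cset F hm σ) → Pat // Eloc F hm σ h} ≤
        Fintype.card (↥(cset F hm σ) → Pat) := Fintype.card_subtype_le _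
    omega
  have hpos : 0 < Nat.card {h : ↥(cset F hm σ) → Pat // ¬ Eloc F hm σ h} := by
    have : Nonempty {h : ↥(cset F hm σ) → Pat // ¬ Eloc F hm σ h} :=
      ⟨⟨hwit F hm σ, not_Eloc_hwit F hm hFtok hFpd σ⟩⟩
    exact Nat.card_pos
  omega

lemma cset_disj (hFpd : (F : Set (Finset (Vtx k))).Pairwise PD) {σ σ' : EvIdx m} {X : CP k} (hX : X ∈ cset F hm σ) (hX' : X ∈ cset F hm σ') :
    σ = σ' := by
  rw [cset, Finset.mem_filter] at hX hX'
  have key : (eLo F hm σ = eLo F hm σ' ∧ eHi F hm σ = eHi F hm σ') ∨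
      (eLo F hm σ = eHi F hm σ' ∧ eHi F hm σ = eLo F hm σ') := by
    rcases hX.2 with ⟨ha, hb⟩ | ⟨ha, hb⟩ <;> rcases hX'.2 with ⟨ha', hb'⟩ | ⟨ha', hb'⟩
    · exact Or.inl ⟨part_unique F hFpd (enum_mem F hm _) (enum_mem F hm _) ha ha',
        part_unique F hFpd (enum_mem F hm _) (enum_mem F hm _) hb hb'⟩
    · exact Or.inr ⟨part_unique F hFpd (enum_mem F hm _) (enum_mem F hm _) ha ha',
        part_unique F hFpd (enum_mem F hm _) (enum_mem F hm _) hb hb'⟩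
    · exact Or.inr ⟨part_unique F hFpd (enum_mem F hm _) (enum_mem F hm _) hb hb',
        part_unique F hFpd (enum_mem F hm _) (enum_mem F hm _) ha ha'⟩
    · exact Or.inl ⟨part_unique F hFpd (enum_mem F hm _) (enum_mem F hm _) hb hb',
        part_unique F hFpd (enum_mem F hm _) (enum_mem F hm _) ha ha'⟩
  have hvals : (σ.2.val = σ'.2.val ∧ σ.1.val = σ'.1.val) ∨
      (σ.2.val = σ'.1.val ∧ σ.1.val = σ'.2.val) := by
    rcases key with ⟨h1, h2⟩ | ⟨h1, h2⟩
    · have e1 := congrArg Fin.val (enum_inj F hm h1)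
      have e2 := congrArg Fin.val (enum_inj F hm h2)
      simp only [loIdx] at e1
      exact Or.inl ⟨e1, e2⟩
    · have e1 := congrArg Fin.val (enum_inj F hm h1)
      have e2 := congrArg Fin.val (enum_inj F hm h2)
      simp only [loIdx] at e1 e2
      exact Or.inr ⟨e1, e2⟩
  have hlt : σ.2.val < σ.1.val := σ.2.isLt
  have hlt' : σ'.2.val < σ'.1.val := σ'.2.isLt
  have heq1 : σ.1.val = σ'.1.val ∧ σ.2.val = σ'.2.val := by
    rcases hvals with ⟨h1, h2⟩ | ⟨h1, h2⟩
    · exact ⟨h2, h1⟩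
    · omega
  obtain ⟨i, x⟩ := σ
  obtain ⟨i', x'⟩ := σ'
  simp only at heq1 hlt hlt'
  have hi : i = i' := Fin.ext heq1.1
  subst hi
  have hx : x = x' := Fin.ext heq1.2
  subst hx
  rfl

/-- The bad set and the main injection. -/
noncomputable def Phi (hFpd : (F : Set (Finset (Vtx k))).Pairwise PD) :
    ({f : Choice k // ∀ σ : EvIdx m, AdjT f (eLo F hm σ) (eHi F hm σ)} ×
      (∀ σ : EvIdx m, ↥(cset F hm σ) → Pat)) →
    (Choice k × (∀ σ : EvIdx m, {h : ↥(cset F hm σ) → Pat // Eloc F hm σ h})) :=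
  fun FH =>
    ⟨fun X => if hX : ∃ σ, X ∈ cset F hm σ then FH.2 hX.choose ⟨X, hX.choose_spec⟩
      else FH.1.val X,
     fun σ => ⟨fun X => FH.1.val X.val, by
        have hagree : ∀ X ∈ cset F hm σ,
            patch (cset F hm σ) (fun X => FH.1.val X.val) g0 X = FH.1.val X := by
          intro X hX
          rw [patch, dif_pos hX]
        exact (adjT_congr F hm hFpd hagree).mpr (FH.1.2 σ)⟩⟩

lemma Phi_inj (hFpd : (F : Set (Finset (Vtx k))).Pairwise PD) : Function.Injective (Phi F hm hFpd) := by
  rintro ⟨⟨f, hf⟩, H⟩ ⟨⟨f', hf'⟩, H'⟩ heq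
  unfold Phi at heq
  rw [Prod.mk.injEq] at heq
  obtain ⟨h1, h2⟩ := heq
  have h2' : ∀ σ (X : ↥(cset F hm σ)), f X.val = f' X.val := by
    intro σ X
    have h3 := congrFun h2 σ
    have h3 := congrArg Subtype.val h3
    exact congrFun h3 X
  have hff : f = f' := by
    funext X
    by_cases hX : ∃ σ, X ∈ cset F hm σ
    · obtain ⟨σ, hXσ⟩ := hX
      exact h2' σ ⟨X, hXσ⟩
    · have h3 := congrFun h1 X
      rw [dif_neg hX, dif_neg hX] at h3
      exact h3
  subst hff
  have hHH : H = H' := by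
    funext σ X
    have h3 := congrFun h1 X.val
    have hex : ∃ σ', X.val ∈ cset F hm σ' := ⟨σ, X.2⟩
    rw [dif_pos hex, dif_pos hex] at h3
    have hch : hex.choose = σ := cset_disj F hm hFpd hex.choose_spec X.2
    have key : ∀ (τ : EvIdx m) (hXτ : X.val ∈ cset F hm τ) (_ : τ = σ)
        (K : (σ' : EvIdx m) → ↥(cset F hm σ') → Pat), K τ ⟨X.val, hXτ⟩ = K σ X := by
      intro τ hXτ hτ K
      subst hτ
      rfl
    calc H σ X = H hex.choose ⟨X.val, hex.choose_spec⟩ := (key _ hex.choose_spec hch H).symm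
      _ = H' hex.choose ⟨X.val, hex.choose_spec⟩ := h3
      _ = H' σ X := key _ hex.choose_spec hch H' 
  subst hHH
  rw [Prod.mk.injEq]
  exact ⟨Subtype.ext rfl, rfl⟩

lemma card_bad_le (hFtok : ∀ s ∈ F, TokOK s) (hFpd : (F : Set (Finset (Vtx k))).Pairwise PD) :
    Nat.card {f : Choice k // ∀ σ : EvIdx m, AdjT f (eLo F hm σ) (eHi F hm σ)} *
      ∏ σ : EvIdx m, 4 ^ (cset F hm σ).card ≤
    4 ^ Fintype.card (CP k) * ∏ σ : EvIdx m, (4 ^ (cset F hm σ).card - 1) := by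
  have hL : ∀ σ : EvIdx m, Nat.card (↥(cset F hm σ) → Pat) = 4 ^ (cset F hm σ).card := by
    intro σ
    rw [Nat.card_fun, card_pat, Nat.card_eq_finsetCard]
  have hR : Nat.card (Choice k) = 4 ^ Fintype.card (CP k) := by
    rw [Nat.card_fun, card_pat, Nat.card_eq_fintype_card]
  have hcard := Nat.card_le_card_of_injective _ (Phi_inj F hm hFpd)
  have hdom : Nat.card ({f : Choice k // ∀ σ : EvIdx m, AdjT f (eLo F hm σ) (eHi F hm σ)} ×
      (∀ σ : EvIdx m, ↥(cset F hm σ) → Pat)) =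
      Nat.card {f : Choice k // ∀ σ : EvIdx m, AdjT f (eLo F hm σ) (eHi F hm σ)} *
        ∏ σ : EvIdx m, 4 ^ (cset F hm σ).card := by
    rw [Nat.card_prod, Nat.card_pi]
    congr 1
    exact Finset.prod_congr rfl (fun σ _ => hL σ)
  have hcodom : Nat.card (Choice k × (∀ σ : EvIdx m, {h : ↥(cset F hm σ) → Pat // Eloc F hm σ h})) =
      4 ^ Fintype.card (CP k) * ∏ σ : EvIdx m, Nat.card {h : ↥(cset F hm σ) → Pat // Eloc F hm σ h} := by
    rw [Nat.card_prod, hR, Nat.card_pi]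
  rw [hdom, hcodom] at hcard
  refine le_trans hcard ?_
  apply Nat.mul_le_mul_left
  apply Finset.prod_le_prod'
  intro σ _
  exact count_Eloc F hm hFtok hFpd σ

lemma card_evidx (m : ℕ) : Fintype.card (EvIdx m) * 2 = m * (m - 1) := by
  rw [Fintype.card_sigma]
  simp only [Fintype.card_fin]
  rw [Fin.sum_univ_eq_sum_range (fun i => i) m]
  exact Finset.sum_range_id_mul_two m

lemma bern : (2 : ℕ) * 255 ^ 512 ≤ 256 ^ 512 := by
  have h : (2 : ℝ) * 255 ^ 512 ≤ 256 ^ 512 := by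
    have h1 : (1 : ℝ) + 512 * (1 / 255) ≤ (1 + 1 / 255) ^ 512 :=
      one_add_mul_le_pow (by norm_num) 512
    have h3 : (2 : ℝ) ≤ (1 + 1 / 255) ^ 512 := le_trans (by norm_num) h1
    have h4 : ((1 : ℝ) + 1 / 255) = 256 / 255 := by norm_num
    rw [h4] at h3
    calc (2 : ℝ) * 255 ^ 512 ≤ (256 / 255) ^ 512 * 255 ^ 512 :=
          mul_le_mul_of_nonneg_right h3 (by positivity)
      _ = 256 ^ 512 := by
          rw [div_pow, div_mul_cancel₀]
          positivity
  exact_mod_cast h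

theorem exists_goodF (k j m : ℕ) (hmj : m = 1024 * j + 1) (hk4 : 4 * k ^ 2 < 2 ^ j) :
    ∃ f : Choice k, GoodF f m := by
  set Ξ : Finset (Finset (Vtx k)) := Finset.univ.filter TokOK with hXi
  set P := Fintype.card (EvIdx m) with hP
  set NCP := Fintype.card (CP k) with hNCP
  have hP2 : P * 2 = m * (m - 1) := card_evidx m
  have hPval : P = 512 * j * m := by
    have hm1 : m - 1 = 1024 * j := by omega
    rw [hm1] at hP2
    have h2 : (512 * j * m) * 2 = m * (1024 * j) := by ring
    omega
  have hXicard : Ξ.card ≤ 4 * k ^ 2 := by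
    have hsub : Ξ ⊆ (Finset.univ.powersetCard 1 ∪ Finset.univ.powersetCard 2 :
        Finset (Finset (Vtx k))) := by
      intro s hs
      rw [hXi, Finset.mem_filter] at hs
      obtain ⟨_, hne, hle, _⟩ := hs
      have h1 : 1 ≤ s.card := Finset.card_pos.mpr hne
      rw [Finset.mem_union, Finset.mem_powersetCard, Finset.mem_powersetCard]
      interval_cases h : s.card
      · exact Or.inl ⟨Finset.subset_univ _, rfl⟩
      · exact Or.inr ⟨Finset.subset_univ _, rfl⟩
    have h2 : Ξ.card ≤ (Finset.univ.powersetCard 1 : Finset (Finset (Vtx k))).card +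
        (Finset.univ.powersetCard 2 : Finset (Finset (Vtx k))).card :=
      le_trans (Finset.card_le_card hsub) (Finset.card_union_le _ _)
    rw [Finset.card_powersetCard, Finset.card_powersetCard, Finset.card_univ] at h2
    have hV : Fintype.card (Vtx k) = 2 * k := by
      simp [Nat.mul_comm]
    rw [hV] at h2
    have hc1 : (2 * k).choose 1 = 2 * k := Nat.choose_one_right _
    have hc2 : (2 * k).choose 2 = k * (2 * k - 1) := by
      rw [Nat.choose_two_right]
      have : 2 * k * (2 * k - 1) = 2 * (k * (2 * k - 1)) := by ring
      rw [this]
      exact Nat.mul_div_cancel_left _ (by norm_num)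
    rw [hc1, hc2] at h2
    have hA : k * (2 * k - 1) ≤ 2 * k ^ 2 := by
      calc k * (2 * k - 1) ≤ k * (2 * k) := Nat.mul_le_mul_left _ (Nat.sub_le _ _)
        _ = 2 * k ^ 2 := by ring
    have hB : k ≤ k ^ 2 := Nat.le_self_pow (by norm_num) k
    omega
  by_contra hno
  push_neg at hno
  -- the set of "bad certificates" covers all choice functions
  have hcover : ∀ f : Choice k, ∃ F ∈ Ξ.powersetCard m,
      (F : Set (Finset (Vtx k))).Pairwise PD ∧ (F : Set (Finset (Vtx k))).Pairwise (AdjT f) ∧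
      (∀ s ∈ F, TokOK s) := by
    intro f
    have hbad : ¬ GoodF f m := hno f
    rw [GoodF] at hbad
    push_neg at hbad
    obtain ⟨F0, htok0, hpd0, hadj0, hge⟩ := hbad
    obtain ⟨F1, hsub1, hcard1⟩ := Finset.exists_subset_card_eq hge
    refine ⟨F1, ?_, ?_, ?_, ?_⟩
    · rw [Finset.mem_powersetCard]
      refine ⟨fun s hs => ?_, hcard1⟩
      rw [hXi, Finset.mem_filter]
      exact ⟨Finset.mem_univ _, htok0 s (hsub1 hs)⟩
    · exact hpd0.mono (Finset.coe_subset.mpr hsub1)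
    · exact hadj0.mono (Finset.coe_subset.mpr hsub1)
    · exact fun s hs => htok0 s (hsub1 hs)
  set cond : Finset (Finset (Vtx k)) → Choice k → Prop := fun F f =>
    (F : Set (Finset (Vtx k))).Pairwise PD ∧ (F : Set (Finset (Vtx k))).Pairwise (AdjT f) ∧
      (∀ s ∈ F, TokOK s) with hcond
  have hcard1 : Fintype.card (Choice k) ≤
      ∑ F ∈ Ξ.powersetCard m, (Finset.univ.filter (cond F)).card := by
    have hcov : (Finset.univ : Finset (Choice k)) ⊆
        (Ξ.powersetCard m).biUnion (fun F => Finset.univ.filter (cond F)) := by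
      intro f _
      obtain ⟨F, hFmem, h1, h2, h3⟩ := hcover f
      exact Finset.mem_biUnion.mpr ⟨F, hFmem,
        Finset.mem_filter.mpr ⟨Finset.mem_univ _, h1, h2, h3⟩⟩
    calc Fintype.card (Choice k) = (Finset.univ : Finset (Choice k)).card :=
          Finset.card_univ.symm
      _ ≤ ((Ξ.powersetCard m).biUnion (fun F => Finset.univ.filter (cond F))).card :=
          Finset.card_le_card hcov
      _ ≤ ∑ F ∈ Ξ.powersetCard m, (Finset.univ.filter (cond F)).card :=
          Finset.card_biUnion_le
  have hperF : ∀ F ∈ Ξ.powersetCard m,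
      (Finset.univ.filter (cond F)).card * 256 ^ P ≤ 255 ^ P * 4 ^ NCP := by
    intro F hFmem
    by_cases hne : (Finset.univ.filter (cond F)).Nonempty
    · obtain ⟨f₀, hf₀⟩ := hne
      rw [Finset.mem_filter] at hf₀
      obtain ⟨-, hpd, -, htok⟩ := hf₀
      have hmF : F.card = m := (Finset.mem_powersetCard.mp hFmem).2
      -- bound the filter by the bad-set cardinality
      have hinj : (Finset.univ.filter (cond F)).card ≤
          Nat.card {f : Choice k // ∀ σ : EvIdx m, AdjT f (eLo F hmF σ) (eHi F hmF σ)} := by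
        rw [← Nat.card_eq_finsetCard (Finset.univ.filter (cond F))]
        apply Nat.card_le_card_of_injective
          (fun fh => (⟨fh.val, fun σ => by
            have hmem := fh.2
            rw [Finset.mem_filter] at hmem
            exact hmem.2.2.1 (Finset.mem_coe.mpr (enum_mem F hmF (loIdx σ)))
              (Finset.mem_coe.mpr (enum_mem F hmF σ.1)) (eLo_ne_eHi F hmF σ)⟩ :
            {f : Choice k // ∀ σ : EvIdx m, AdjT f (eLo F hmF σ) (eHi F hmF σ)}))
        intro a b hab
        exact Subtype.ext (congrArg
          (fun x : {f : Choice k // ∀ σ : EvIdx m, AdjT f (eLo F hmF σ) (eHi F hmF σ)} =>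
            x.val) hab)
      set A := Nat.card {f : Choice k // ∀ σ : EvIdx m, AdjT f (eLo F hmF σ) (eHi F hmF σ)}
        with hA
      set Q := ∏ σ : EvIdx m, 4 ^ (cset F hmF σ).card with hQ
      set R := ∏ σ : EvIdx m, (4 ^ (cset F hmF σ).card - 1) with hR
      have hAQ : A * Q ≤ 4 ^ NCP * R := card_bad_le F hmF htok hpd
      have hQpos : 0 < Q := Finset.prod_pos (fun σ _ => by positivity)
      have h256 : 256 ^ P * R ≤ 255 ^ P * Q := by
        rw [hP, hQ, hR, ← Finset.card_univ, ← Finset.prod_const, ← Finset.prod_const,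
          ← Finset.prod_mul_distrib, ← Finset.prod_mul_distrib]
        apply Finset.prod_le_prod'
        intro σ _
        have hc4 := cset_card_le F hmF htok hpd σ
        have h1 : 4 ^ (cset F hmF σ).card ≤ 256 := by
          calc 4 ^ (cset F hmF σ).card ≤ 4 ^ 4 := Nat.pow_le_pow_right (by norm_num) hc4
            _ = 256 := by norm_num
        have h2 : 1 ≤ 4 ^ (cset F hmF σ).card := Nat.one_le_pow _ _ (by norm_num)
        omega
      have hchain : ((Finset.univ.filter (cond F)).card * 256 ^ P) * Q ≤
          (255 ^ P * 4 ^ NCP) * Q := by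
        calc ((Finset.univ.filter (cond F)).card * 256 ^ P) * Q
            ≤ (A * 256 ^ P) * Q := by
              apply Nat.mul_le_mul_right
              exact Nat.mul_le_mul_right _ hinj
          _ = (A * Q) * 256 ^ P := by ring
          _ ≤ (4 ^ NCP * R) * 256 ^ P := Nat.mul_le_mul_right _ hAQ
          _ = 4 ^ NCP * (256 ^ P * R) := by ring
          _ ≤ 4 ^ NCP * (255 ^ P * Q) := Nat.mul_le_mul_left _ h256
          _ = (255 ^ P * 4 ^ NCP) * Q := by ring
      exact Nat.le_of_mul_le_mul_right hchain hQpos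
    · rw [Finset.not_nonempty_iff_eq_empty.mp hne]
      simp
  -- summing up
  have hsum : Fintype.card (Choice k) * 256 ^ P ≤
      (Ξ.powersetCard m).card * (255 ^ P * 4 ^ NCP) := by
    calc Fintype.card (Choice k) * 256 ^ P
        ≤ (∑ F ∈ Ξ.powersetCard m, (Finset.univ.filter (cond F)).card) * 256 ^ P :=
          Nat.mul_le_mul_right _ hcard1
      _ = ∑ F ∈ Ξ.powersetCard m, ((Finset.univ.filter (cond F)).card * 256 ^ P) := by
          rw [Finset.sum_mul]
      _ ≤ ∑ _F ∈ Ξ.powersetCard m, (255 ^ P * 4 ^ NCP) := Finset.sum_le_sum hperF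
      _ = (Ξ.powersetCard m).card * (255 ^ P * 4 ^ NCP) := by
          rw [Finset.sum_const, smul_eq_mul]
  have hNfam : (Ξ.powersetCard m).card * 255 ^ P < 256 ^ P := by
    have h1 : (Ξ.powersetCard m).card ≤ Ξ.card ^ m := by
      rw [Finset.card_powersetCard]
      exact Nat.choose_le_pow _ _
    have h2 : Ξ.card ^ m ≤ (4 * k ^ 2) ^ m := Nat.pow_le_pow_left hXicard m
    have h3 : (4 * k ^ 2) ^ m < (2 ^ j) ^ m := Nat.pow_lt_pow_left hk4 (by omega)
    have h4 : (2 ^ j) ^ m * 255 ^ P ≤ 256 ^ P := by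
      rw [hPval]
      have e1 : (2 ^ j) ^ m = 2 ^ (j * m) := by rw [← pow_mul]
      have e2 : (255 : ℕ) ^ (512 * j * m) = (255 ^ 512) ^ (j * m) := by
        rw [← pow_mul]; ring_nf
      have e3 : (256 : ℕ) ^ (512 * j * m) = (256 ^ 512) ^ (j * m) := by
        rw [← pow_mul]; ring_nf
      rw [e1, e2, e3]
      calc 2 ^ (j * m) * (255 ^ 512) ^ (j * m) = (2 * 255 ^ 512) ^ (j * m) := by
            rw [mul_pow]
        _ ≤ (256 ^ 512) ^ (j * m) := Nat.pow_le_pow_left bern _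
    have h5 : 0 < 255 ^ P := by positivity
    calc (Ξ.powersetCard m).card * 255 ^ P ≤ (4 * k ^ 2) ^ m * 255 ^ P :=
          Nat.mul_le_mul_right _ (le_trans h1 h2)
      _ < (2 ^ j) ^ m * 255 ^ P := (Nat.mul_lt_mul_right h5).mpr h3
      _ ≤ 256 ^ P := h4
  have hCh : Fintype.card (Choice k) = 4 ^ NCP := by
    rw [Fintype.card_fun]
    have h4 : Fintype.card Pat = 4 := by simp
    rw [h4]
  have hcontra : Fintype.card (Choice k) * 256 ^ P < Fintype.card (Choice k) * 256 ^ P := by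
    calc Fintype.card (Choice k) * 256 ^ P
        ≤ (Ξ.powersetCard m).card * (255 ^ P * 4 ^ NCP) := hsum
      _ = ((Ξ.powersetCard m).card * 255 ^ P) * 4 ^ NCP := by ring
      _ < 256 ^ P * 4 ^ NCP := (Nat.mul_lt_mul_right (by positivity)).mpr hNfam
      _ = Fintype.card (Choice k) * 256 ^ P := by rw [hCh]; ring
  exact absurd hcontra (lt_irrefl _)

end Counting

/-! ### Numeric estimates and the final glue -/

lemma sq_le_two_pow (s : ℕ) : (s + 1) ^ 2 ≤ 2 ^ (s + 2) := by
  induction s with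
  | zero => norm_num
  | succ n ih =>
    rcases Nat.lt_or_ge n 2 with h | h
    · interval_cases n <;> norm_num
    · have h1 : (n + 1 + 1) ^ 2 ≤ 2 * (n + 1) ^ 2 := by nlinarith
      calc (n + 1 + 1) ^ 2 ≤ 2 * (n + 1) ^ 2 := h1
        _ ≤ 2 * 2 ^ (n + 2) := by omega
        _ = 2 ^ (n + 1 + 2) := by ring

lemma log_le_sqrt_succ (n : ℕ) : Nat.log 2 n ≤ Nat.sqrt n + 1 := by
  rcases Nat.eq_zero_or_pos n with rfl | hn
  · simp
  have h1 : n < 2 ^ (Nat.sqrt n + 2) := by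
    calc n < (Nat.sqrt n + 1) ^ 2 := Nat.lt_succ_sqrt' n
      _ ≤ 2 ^ (Nat.sqrt n + 2) := sq_le_two_pow _
  have h2 : Nat.log 2 n < Nat.sqrt n + 2 := Nat.log_lt_of_lt_pow (by omega) h1
  omega

lemma sqrt_two_mul_le (t : ℕ) : Nat.sqrt (2 * t) ≤ 2 * Nat.sqrt t + 1 := by
  have h2 : t < (Nat.sqrt t + 1) ^ 2 := Nat.lt_succ_sqrt' t
  have h1 : 2 * t < (2 * Nat.sqrt t + 2) ^ 2 := by nlinarith
  have h3 : Nat.sqrt (2 * t) < 2 * Nat.sqrt t + 2 := Nat.sqrt_lt'.mpr h1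
  omega

end FWAux

open FWAux

/-- For every `ε > 0` there exists `t₀` such that for every `t ≥ t₀` there is a finite simple
graph `G` that admits no `K_t`-minor but admits a frozen proper `⌈(3/2-ε)t⌉`-colouring. -/
theorem statement2 (ε : ℝ) (hε : 0 < ε) :
    ∃ t₀ : ℕ, ∀ t : ℕ, t₀ ≤ t →
      ∃ (V : Type) (_ : Fintype V) (G : SimpleGraph V),
        ¬ HasKMinor G t ∧
        ∃ α : V → Fin ⌈(3 / 2 - ε) * (t : ℝ)⌉₊,
          IsProperColoring G α ∧ IsFrozen G α := by
  set s₀ : ℕ := ⌈(40000 : ℝ) / ε⌉₊ + 40000 with hs₀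
  refine ⟨s₀ ^ 2, ?_⟩
  intro t ht
  set k := ⌈(3 / 2 - ε) * (t : ℝ)⌉₊ with hkdef
  set L := Nat.log 2 k with hLdef
  set j := 2 * L + 5 with hjdef
  set m := 1024 * j + 1 with hmdef
  -- basic quantities
  set s := Nat.sqrt t with hsdef
  clear_value k L j m s s₀
  have hss₀ : s₀ ≤ s := by
    rw [hsdef, ← Nat.sqrt_eq' s₀]
    exact Nat.sqrt_le_sqrt ht
  have hs₀40000 : 40000 ≤ s₀ := by omega
  have ht40000 : 40000 ^ 2 ≤ t := by
    calc (40000 : ℕ) ^ 2 ≤ s₀ ^ 2 := Nat.pow_le_pow_left hs₀40000 2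
      _ ≤ t := ht
  have ht1 : 1 ≤ t := by omega
  -- the good choice function
  have h4k : 4 * k ^ 2 < 2 ^ j := by
    have h1 : k < 2 ^ (L + 1) := by
      rw [hLdef]
      exact Nat.lt_pow_succ_log_self (by norm_num) k
    have h2 : k ^ 2 < (2 ^ (L + 1)) ^ 2 := by
      have := Nat.pow_lt_pow_left h1 (n := 2) (by norm_num)
      exact this
    have h3 : (4 : ℕ) * (2 ^ (L + 1)) ^ 2 = 2 ^ (2 * L + 4) := by
      rw [← pow_mul]
      have : (4 : ℕ) = 2 ^ 2 := by norm_num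
      rw [this, ← pow_add]
      ring_nf
    calc 4 * k ^ 2 < 4 * (2 ^ (L + 1)) ^ 2 := by omega
      _ = 2 ^ (2 * L + 4) := h3
      _ ≤ 2 ^ j := Nat.pow_le_pow_right (by norm_num) (by omega)
  obtain ⟨f, hgood⟩ := exists_goodF k j m hmdef h4k
  -- the m bound
  have hk2t : k ≤ 2 * t := by
    rw [hkdef]
    apply Nat.ceil_le.mpr
    push_cast
    nlinarith [Nat.cast_nonneg (α := ℝ) t]
  have hL2s : L ≤ 2 * s + 2 := by
    have h1 : L ≤ Nat.log 2 (2 * t) := by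
      rw [hLdef]
      exact Nat.log_mono_right hk2t
    have h2 : Nat.log 2 (2 * t) ≤ Nat.sqrt (2 * t) + 1 := log_le_sqrt_succ _
    have h3 : Nat.sqrt (2 * t) ≤ 2 * s + 1 := by
      rw [hsdef]
      exact sqrt_two_mul_le t
    omega
  have hm_bound : m ≤ 4096 * s + 9217 := by
    rw [hmdef, hjdef]
    omega
  -- the key inequality  2k + 6m < 3t + 6
  have hineq : 2 * k + 6 * m < 3 * t + 6 := by
    have hεs : (40000 : ℝ) ≤ ε * s := by
      have h1 : (40000 : ℝ) / ε ≤ (⌈(40000 : ℝ) / ε⌉₊ : ℝ) := Nat.le_ceil _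
      have h2 : (s₀ : ℝ) ≤ (s : ℝ) := by exact_mod_cast hss₀
      have h3 : ((⌈(40000 : ℝ) / ε⌉₊ : ℝ)) ≤ (s₀ : ℝ) := by
        rw [hs₀]
        push_cast
        linarith
      calc (40000 : ℝ) = 40000 / ε * ε := (div_mul_cancel₀ _ (ne_of_gt hε)).symm
        _ ≤ (⌈(40000 : ℝ) / ε⌉₊ : ℝ) * ε := mul_le_mul_of_nonneg_right h1 hε.le
        _ ≤ (s : ℝ) * ε := mul_le_mul_of_nonneg_right (le_trans h3 h2) hε.le
        _ = ε * s := mul_comm _ _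
    have hst : ((s : ℝ)) * s ≤ (t : ℝ) := by
      have h := Nat.sqrt_le t
      rw [← hsdef] at h
      exact_mod_cast h
    have hs1 : (1 : ℝ) ≤ (s : ℝ) := by
      have : 1 ≤ s := by omega
      exact_mod_cast this
    have hmR : (m : ℝ) ≤ 4096 * s + 9217 := by exact_mod_cast hm_bound
    have h3m : 3 * (m : ℝ) ≤ ε * t := by
      have h5 : ε * t ≥ ε * (s * s) := by
        apply mul_le_mul_of_nonneg_left hst (le_of_lt hε)
      have h6 : ε * (s * s) = (ε * s) * s := by ring
      have h7 : (40000 : ℝ) * s ≤ (ε * s) * s := by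
        apply mul_le_mul_of_nonneg_right hεs
        positivity
      nlinarith
    rcases Nat.eq_zero_or_pos k with hk0 | hkpos
    · -- k = 0 : very easy
      have hL0 : L = 0 := by rw [hLdef, hk0]; simp
      have : m = 5121 := by rw [hmdef, hjdef, hL0]
      omega
    · have hxpos : (0 : ℝ) < (3 / 2 - ε) * t := by
        rw [hkdef] at hkpos
        exact Nat.ceil_pos.mp hkpos
      have hkR : (k : ℝ) < (3 / 2 - ε) * t + 1 := by
        rw [hkdef]
        exact Nat.ceil_lt_add_one (le_of_lt hxpos)
      have hgoal : (2 * k + 6 * m : ℝ) < 3 * t + 6 := by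
        push_cast
        nlinarith
      exact_mod_cast hgoal
  refine ⟨Vtx k, inferInstance, Gf f, no_minor hgood hineq, Prod.fst, ?_, ?_, ?_⟩
  · intro u v h
    exact adj_ne_part h
  · intro c
    exact ⟨(c, 0), rfl⟩
  · intro c₁ c₂ hne
    exact union_conn f hne
end

section
/- For every graph G in the class 𝒢_n, the n-colouring assigning colour i to both a_i and b_i (for 1 ≤ i ≤ n) is a proper frozen n-colouring of G. -/
/-- The vertex set `{a_1, …, a_n, b_1, …, b_n}`: `(i, false)` is `a_i` and `(i, true)` is
`b_i`. -/
abbrev Vtx (n : ℕ) := Fin n × Bool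

/-- `G` belongs to the class `𝒢_n`: for each pair `i < j` there is exactly one excluded pair
among `a_i a_j, a_i b_j, b_i a_j, b_i b_j` (recorded by `excl` as a pair of booleans), the
other three pairs are edges, and there are no other edges. -/
def InGClass (n : ℕ) (G : SimpleGraph (Vtx n)) : Prop :=
  ∃ excl : {p : Fin n × Fin n // p.1 < p.2} → Bool × Bool,
    ∀ u v : Vtx n, G.Adj u v ↔
      (∃ h : u.1 < v.1, (u.2, v.2) ≠ excl ⟨(u.1, v.1), h⟩) ∨
      (∃ h : v.1 < u.1, (v.2, u.2) ≠ excl ⟨(v.1, u.1), h⟩)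

/-- For every graph `G` in the class `𝒢_n`, the `n`-colouring assigning colour `i` to both
`a_i` and `b_i` is a proper frozen `n`-colouring of `G`. -/
theorem statement7 (n : ℕ) (G : SimpleGraph (Vtx n)) (hG : InGClass n G) :
    IsProperColoring G (fun v : Vtx n => v.1) ∧ IsFrozen G (fun v : Vtx n => v.1) := by
  obtain ⟨excl, hE⟩ := hG
  refine ⟨?_, ?_, ?_⟩
  · intro u v huv
    rw [hE] at huv
    rcases huv with ⟨h, _⟩ | ⟨h, _⟩
    · exact h.ne
    · exact h.ne'
  · intro c; exact ⟨(c, false), rfl⟩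
  · have key : ∀ i j : Fin n, (hij : i < j) →
        (G.induce {v : Vtx n | v.1 = i ∨ v.1 = j}).Connected := by
      intro i j hij
      set S : Set (Vtx n) := {v : Vtx n | v.1 = i ∨ v.1 = j} with hS
      set e := excl ⟨(i, j), hij⟩ with he
      have hadjj : ∀ y : Bool, G.Adj (i, !e.1) (j, y) := by
        intro y
        rw [hE]
        exact Or.inl ⟨hij, fun h => Bool.not_ne_self e.1 (congrArg Prod.fst h)⟩
      have hadji : ∀ x : Bool, G.Adj (i, x) (j, !e.2) := by
        intro x
        rw [hE]
        exact Or.inl ⟨hij, fun h => Bool.not_ne_self e.2 (congrArg Prod.snd h)⟩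
      have hreach : ∀ v : ↥S, (G.induce S).Reachable ⟨(i, !e.1), Or.inl rfl⟩ v := by
        rintro ⟨⟨k, x⟩, hmem⟩
        rcases hmem with hk | hk
        · change k = i at hk; subst hk
          have h1 : (G.induce S).Adj ⟨(k, !e.1), Or.inl rfl⟩ ⟨(j, !e.2), Or.inr rfl⟩ :=
            hadjj (!e.2)
          have h2 : (G.induce S).Adj ⟨(k, x), Or.inl rfl⟩ ⟨(j, !e.2), Or.inr rfl⟩ :=
            hadji x
          exact h1.reachable.trans h2.reachable.symm
        · change k = j at hk; subst hk
          have h1 : (G.induce S).Adj ⟨(i, !e.1), Or.inl rfl⟩ ⟨(k, x), Or.inr rfl⟩ := hadjj x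
          exact h1.reachable
      have : Nonempty ↥S := ⟨⟨(i, !e.1), Or.inl rfl⟩⟩
      exact ⟨fun u v => (hreach u).symm.trans (hreach v)⟩
    intro c₁ c₂ hne
    rcases hne.lt_or_gt with h | h
    · exact key c₁ c₂ h
    · have hset : {v : Vtx n | v.1 = c₁ ∨ v.1 = c₂} = {v : Vtx n | v.1 = c₂ ∨ v.1 = c₁} := by
        ext v; exact or_comm
      rw [show {v : Vtx n | (fun v : Vtx n => v.1) v = c₁ ∨ (fun v : Vtx n => v.1) v = c₂} =
          {v : Vtx n | v.1 = c₂ ∨ v.1 = c₁} from hset]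
      exact key c₂ c₁ h
end

section
/- Let G be a graph in the class 𝒢_n and suppose there exist four distinct indices i, j, k, ℓ such that none of the pairs a_i b_j, a_j b_k, a_k b_ℓ, a_ℓ b_i is an edge of G. Then the map α defined by α(a_p) = α(b_p) = p for all p ∉ {i,j,k,ℓ}, α(a_i) = α(b_j) = i, α(a_j) = α(b_k) = j, α(a_k) = α(b_ℓ) = k, α(a_ℓ) = α(b_i) = ℓ, is a proper n-colouring of G whose partition into colour classes differs from the partition {{a_p, b_p} : 1 ≤ p ≤ n}. -/
/-- The recolouring of the paper: `α(a_p) = α(b_p) = p` for `p ∉ {i, j, k, ℓ}`, and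
`α(a_i) = α(b_j) = i`, `α(a_j) = α(b_k) = j`, `α(a_k) = α(b_ℓ) = k`, `α(a_ℓ) = α(b_i) = ℓ`. -/
def recolouring {n : ℕ} (i j k l : Fin n) : Vtx n → Fin n := fun v =>
  if v.2 = false then v.1
  else if v.1 = j then i
  else if v.1 = k then j
  else if v.1 = l then k
  else if v.1 = i then l
  else v.1

/-- If `G ∈ 𝒢_n` and `i, j, k, ℓ` are four distinct indices such that none of
`a_i b_j, a_j b_k, a_k b_ℓ, a_ℓ b_i` is an edge of `G`, then the recolouring above is a
proper `n`-colouring of `G` whose partition into colour classes differs from the partition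
`{{a_p, b_p} : 1 ≤ p ≤ n}`. -/
theorem statement8 (n : ℕ) (G : SimpleGraph (Vtx n)) (hG : InGClass n G)
    (i j k l : Fin n)
    (hij : i ≠ j) (hik : i ≠ k) (hil : i ≠ l) (hjk : j ≠ k) (hjl : j ≠ l) (hkl : k ≠ l)
    (h1 : ¬ G.Adj (i, false) (j, true)) (h2 : ¬ G.Adj (j, false) (k, true))
    (h3 : ¬ G.Adj (k, false) (l, true)) (h4 : ¬ G.Adj (l, false) (i, true)) :
    IsProperColoring G (recolouring i j k l) ∧
    {C : Set (Vtx n) | ∃ c : Fin n, C = {v | recolouring i j k l v = c}} ≠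
      {C : Set (Vtx n) | ∃ p : Fin n, C = {(p, false), (p, true)}} := by
  constructor
  · intro u v hadj heq
    have hne : u.1 ≠ v.1 := by
      obtain ⟨excl, hspec⟩ := hG
      rcases (hspec u v).1 hadj with ⟨h, _⟩ | ⟨h, _⟩
      · exact Fin.ne_of_lt h
      · exact (Fin.ne_of_lt h).symm
    obtain ⟨p, bp⟩ := u
    obtain ⟨q, bq⟩ := v
    simp only [recolouring] at heq
    simp only [] at hne
    cases bp <;> cases bq <;> simp only [Bool.false_eq_true, if_true, if_false,
      reduceCtorEq, ite_true, ite_false] at heq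
    · exact hne heq
    · split_ifs at heq with hc1 hc2 hc3 hc4
      · subst hc1; subst heq; exact h1 hadj
      · subst hc2; subst heq; exact h2 hadj
      · subst hc3; subst heq; exact h3 hadj
      · subst hc4; subst heq; exact h4 hadj
      · exact hne heq
    · split_ifs at heq with hc1 hc2 hc3 hc4
      · subst hc1; subst heq; exact h1 hadj.symm
      · subst hc2; subst heq; exact h2 hadj.symm
      · subst hc3; subst heq; exact h3 hadj.symm
      · subst hc4; subst heq; exact h4 hadj.symm
      · exact hne heq
    · split_ifs at heq <;> simp_all
  · intro hset
    have hmem : ({v : Vtx n | recolouring i j k l v = i}) ∈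
        {C : Set (Vtx n) | ∃ p : Fin n, C = {(p, false), (p, true)}} := by
      rw [← hset]; exact ⟨i, rfl⟩
    obtain ⟨p, hp⟩ := hmem
    have ha : ((i, false) : Vtx n) ∈ ({v : Vtx n | recolouring i j k l v = i}) := by
      simp [recolouring]
    have hb : ((j, true) : Vtx n) ∈ ({v : Vtx n | recolouring i j k l v = i}) := by
      simp [recolouring]
    rw [hp] at ha hb
    simp only [Set.mem_insert_iff, Set.mem_singleton_iff, Prod.mk.injEq,
      Bool.false_eq_true, Bool.true_eq_false, and_false, or_false, false_or,
      and_true] at ha hb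
    exact hij (ha.trans hb.symm)
end

section
/- In the random graph G_n, for every k, the probability that some set of k vertices induces a clique is at most (2n choose k) · (3/4)^(k choose 2). -/
open MeasureTheory
open scoped ENNReal

/-- The index set of unordered pairs `i < j`. -/
abbrev PairIdx (n : ℕ) := {p : Fin n × Fin n // p.1 < p.2}

/-- The sample space: for each pair `i < j`, one of the four possible pairs (encoded by an
element of `Fin 4` via `code`) is chosen to be the non-edge. -/
abbrev Omega (n : ℕ) := PairIdx n → Fin 4

/-- Encoding of the four pairs `(a_i,a_j), (a_i,b_j), (b_i,a_j), (b_i,b_j)` as `Fin 4`. -/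
def code : Bool × Bool → Fin 4
  | (false, false) => 0
  | (false, true) => 1
  | (true, false) => 2
  | (true, true) => 3

instance (n : ℕ) : MeasurableSpace (Omega n) := ⊤

/-- The random graph `G_n` determined by the sample point `ω`: for `i < j`, the vertices
`(i, x)` and `(j, y)` are adjacent iff `(x, y)` is not the uniformly chosen excluded pair
`ω ⟨(i, j), _⟩`; `a_i` and `b_i` are never adjacent. -/
def Gn (n : ℕ) (ω : Omega n) : SimpleGraph (Vtx n) where
  Adj u v :=
    (∃ h : u.1 < v.1, ω ⟨(u.1, v.1), h⟩ ≠ code (u.2, v.2)) ∨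
    (∃ h : v.1 < u.1, ω ⟨(v.1, u.1), h⟩ ≠ code (v.2, u.2))
  symm := by
    constructor
    rintro u v (⟨h1, h2⟩ | ⟨h1, h2⟩)
    · exact Or.inr ⟨h1, h2⟩
    · exact Or.inl ⟨h1, h2⟩
  loopless := by
    constructor
    rintro u (⟨h1, _⟩ | ⟨h1, _⟩) <;> exact absurd h1 (lt_irrefl _)

/-- The uniform probability measure on the sample space: the excluded pairs are chosen
independently and uniformly at random. -/
noncomputable def Pn (n : ℕ) : Measure (Omega n) :=
  (PMF.uniformOfFintype (Omega n)).toMeasure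

open Finset in
theorem card_count (ι : Type*) [Fintype ι] [DecidableEq ι] (P : Finset ι) (c : ι → Fin 4) :
    Fintype.card {ω : ι → Fin 4 // ∀ p ∈ P, ω p ≠ c p} = 3 ^ P.card * 4 ^ (Fintype.card ι - P.card) := by
  have e : {ω : ι → Fin 4 // ∀ p ∈ P, ω p ≠ c p} ≃ ∀ i : ι, {x : Fin 4 // i ∈ P → x ≠ c i} := by
    refine (Equiv.subtypeEquivRight ?_).trans (Equiv.subtypePiEquivPi)
    intro f; constructor
    · intro h i hi; exact h i hi
    · intro h i hi; exact h i hi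
  rw [Fintype.card_congr e, Fintype.card_pi]
  have : ∀ i : ι, Fintype.card {x : Fin 4 // i ∈ P → x ≠ c i} = if i ∈ P then 3 else 4 := by
    intro i
    by_cases hi : i ∈ P
    · rw [if_pos hi]
      have h3 : Fintype.card {x : Fin 4 // ¬ (x = c i)} = 3 := by
        rw [Fintype.card_subtype_compl, Fintype.card_subtype_eq]; rfl
      rw [← h3]
      exact Fintype.card_congr (Equiv.subtypeEquivRight (by simp [hi]))
    · rw [if_neg hi]
      have : Fintype.card {x : Fin 4 // i ∈ P → x ≠ c i} = Fintype.card (Fin 4) :=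
        Fintype.card_congr (Equiv.subtypeUnivEquiv (fun x h => absurd h hi))
      rw [this]; rfl
  simp_rw [this]
  rw [Finset.prod_ite, Finset.prod_const, Finset.prod_const, Finset.filter_mem_eq_inter,
    Finset.univ_inter]
  have hc : filter (fun x => x ∉ P) univ = Pᶜ := by ext x; simp
  rw [hc, Finset.card_compl]

set_option maxHeartbeats 1000000 in
theorem prob_count (n : ℕ) (P : Finset (PairIdx n)) (c : PairIdx n → Fin 4) :
    Pn n {ω | ∀ p ∈ P, ω p ≠ c p} = (3 / 4 : ℝ≥0∞) ^ P.card := by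
  rw [Pn, PMF.toMeasure_uniformOfFintype_apply _ MeasurableSpace.measurableSet_top]
  have hcard : Nat.card {ω : Omega n // ω ∈ {ω | ∀ p ∈ P, ω p ≠ c p}} =
      3 ^ P.card * 4 ^ (Fintype.card (PairIdx n) - P.card) := by
    rw [← card_count (PairIdx n) P c]
    rw [Nat.card_eq_fintype_card]
    exact Fintype.card_congr (Equiv.subtypeEquivRight (fun _ => Iff.rfl))
  simp only [← Nat.card_eq_fintype_card]
  rw [hcard]
  have hfun : Nat.card (Omega n) = 4 ^ Fintype.card (PairIdx n) := by
    rw [Nat.card_eq_fintype_card, Fintype.card_fun]; rfl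
  rw [hfun]
  have ha : P.card ≤ Fintype.card (PairIdx n) := by
    simpa using Finset.card_le_card (Finset.subset_univ P)
  have h4 : (4 : ℝ≥0∞) ^ Fintype.card (PairIdx n) =
      4 ^ P.card * 4 ^ (Fintype.card (PairIdx n) - P.card) := by
    rw [← pow_add, Nat.add_sub_cancel' ha]
  push_cast
  rw [h4, mul_comm ((4:ℝ≥0∞) ^ P.card), mul_comm ((3:ℝ≥0∞) ^ P.card),
    ENNReal.mul_div_mul_left _ _ (by positivity) (by simp),
    ENNReal.div_eq_inv_mul, ENNReal.inv_pow, ← mul_pow]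
  congr 1
  rw [ENNReal.div_eq_inv_mul, mul_comm]


theorem card_pairs (n : ℕ) (I : Finset (Fin n)) :
    (Finset.univ.filter (fun p : PairIdx n => p.1.1 ∈ I ∧ p.1.2 ∈ I)).card = I.card.choose 2 := by
  rw [← Finset.card_powersetCard 2 I]
  apply Finset.card_bij (fun p _ => ({p.1.1, p.1.2} : Finset (Fin n)))
  · rintro ⟨⟨a, b⟩, hab⟩ hp
    simp only [Finset.mem_filter] at hp
    rw [Finset.mem_powersetCard]
    refine ⟨?_, Finset.card_pair (ne_of_lt hab)⟩
    intro x hx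
    rcases Finset.mem_insert.1 hx with h | h
    · exact h ▸ hp.2.1
    · exact (Finset.mem_singleton.1 h) ▸ hp.2.2
  · rintro ⟨⟨a, b⟩, hab⟩ hp ⟨⟨c, d⟩, hcd⟩ hq h
    simp only at h hab hcd
    have hac : a = c ∨ a = d := by
      have := h ▸ (Finset.mem_insert_self a {b})
      simpa using this
    have hbc : b = c ∨ b = d := by
      have := h ▸ (Finset.mem_insert.2 (Or.inr (Finset.mem_singleton_self b)))
      simpa using this
    have hca : c = a ∨ c = b := by
      have := h.symm ▸ (Finset.mem_insert_self c {d})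
      simpa using this
    have had : a = c ∧ b = d := by
      rcases hac with h1 | h1
      · refine ⟨h1, ?_⟩
        rcases hbc with h2 | h2
        · exact absurd (h1 ▸ h2 ▸ hab) (lt_irrefl _)
        · exact h2
      · rcases hbc with h2 | h2
        · exact absurd (hcd.trans (h1 ▸ h2 ▸ hab)) (lt_irrefl _)
        · exact absurd (h1.trans h2.symm) (ne_of_lt hab)
    exact Subtype.ext (Prod.ext had.1 had.2)
  · intro t ht
    rw [Finset.mem_powersetCard] at ht
    obtain ⟨a, b, hab, rfl⟩ := Finset.card_eq_two.1 ht.2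
    rcases lt_or_gt_of_ne hab with h | h
    · refine ⟨⟨(a, b), h⟩, ?_, rfl⟩
      simp only [Finset.mem_filter, Finset.mem_univ, true_and]
      exact ⟨ht.1 (Finset.mem_insert_self a {b}), ht.1 (by simp)⟩
    · refine ⟨⟨(b, a), h⟩, ?_, ?_⟩
      · simp only [Finset.mem_filter, Finset.mem_univ, true_and]
        exact ⟨ht.1 (by simp), ht.1 (Finset.mem_insert_self a {b})⟩
      · exact Finset.pair_comm b a

theorem clique_bound (n : ℕ) (S : Finset (Vtx n)) :
    Pn n {ω | (Gn n ω).IsClique (S : Set (Vtx n))} ≤ (3 / 4 : ℝ≥0∞) ^ (S.card.choose 2) := by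
  by_cases hinj : Set.InjOn Prod.fst (S : Set (Vtx n))
  · set I := S.image Prod.fst with hIdef
    have hI : I.card = S.card := Finset.card_image_of_injOn hinj
    set P := Finset.univ.filter (fun p : PairIdx n => p.1.1 ∈ I ∧ p.1.2 ∈ I) with hPdef
    set c : PairIdx n → Fin 4 :=
      fun p => code (decide ((p.1.1, true) ∈ S), decide ((p.1.2, true) ∈ S)) with hcdef
    have key : ∀ u ∈ S, decide ((u.1, true) ∈ S) = u.2 := by
      intro u hu
      cases hu2 : u.2 with
      | true =>
        have : (u.1, true) ∈ S := by
          have : u = (u.1, true) := Prod.ext rfl hu2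
          exact this ▸ hu
        simp [this]
      | false =>
        have : (u.1, true) ∉ S := by
          intro hmem
          have heq := hinj (Finset.mem_coe.2 hu) (Finset.mem_coe.2 hmem) rfl
          have h2 : u.2 = true := congrArg Prod.snd heq
          rw [hu2] at h2
          exact Bool.false_ne_true h2
        simp [this]
    have hsub : {ω | (Gn n ω).IsClique (S : Set (Vtx n))} ⊆ {ω | ∀ p ∈ P, ω p ≠ c p} := by
      intro ω hω p hp
      simp only [hPdef, Finset.mem_filter, Finset.mem_univ, true_and] at hp
      obtain ⟨u, hu, hu1⟩ := Finset.mem_image.1 hp.1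
      obtain ⟨v, hv, hv1⟩ := Finset.mem_image.1 hp.2
      have hlt : u.1 < v.1 := by rw [hu1, hv1]; exact p.2
      have hne : u ≠ v := fun h => absurd (h ▸ hlt) (lt_irrefl _)
      have hadj := hω (Finset.mem_coe.2 hu) (Finset.mem_coe.2 hv) hne
      rcases hadj with ⟨h, hne'⟩ | ⟨h, _⟩
      · have hpe : p = ⟨(u.1, v.1), h⟩ := Subtype.ext (Prod.ext hu1.symm hv1.symm)
        subst hpe
        have hce : c ⟨(u.1, v.1), h⟩ = code (u.2, v.2) := by
          change code (decide ((u.1, true) ∈ S), decide ((v.1, true) ∈ S)) = code (u.2, v.2)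
          rw [key u hu, key v hv]
        rw [hce]
        exact hne'
      · exact absurd (hlt.trans h) (lt_irrefl _)
    calc Pn n {ω | (Gn n ω).IsClique (S : Set (Vtx n))}
        ≤ Pn n {ω | ∀ p ∈ P, ω p ≠ c p} := measure_mono hsub
      _ = (3 / 4 : ℝ≥0∞) ^ P.card := prob_count n P c
      _ = (3 / 4 : ℝ≥0∞) ^ (S.card.choose 2) := by
          rw [hPdef, card_pairs n I, hI]
  · rw [Set.injOn_iff_injective] at hinj
    have hempty : {ω | (Gn n ω).IsClique (S : Set (Vtx n))} = ∅ := by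
      rw [Set.eq_empty_iff_forall_notMem]
      intro ω hω
      apply hinj
      intro u v huv
      by_contra hne
      have h1 : (u : Vtx n).1 = (v : Vtx n).1 := huv
      have hadj := hω u.2 v.2 (fun h => hne (Subtype.ext h))
      rcases hadj with ⟨h, _⟩ | ⟨h, _⟩ <;>
        · rw [h1] at h
          exact absurd h (lt_irrefl _)
    rw [hempty]
    simp

/-- In the random graph `G_n`, for every `k`, the probability that some set of `k` vertices
induces a clique is at most `(2n choose k) * (3/4)^(k choose 2)`. -/
theorem statement13 (n k : ℕ) :
    Pn n {ω | ∃ S : Finset (Vtx n), S.card = k ∧ (Gn n ω).IsClique (S : Set (Vtx n))} ≤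
      ((2 * n).choose k : ℝ≥0∞) * (3 / 4 : ℝ≥0∞) ^ k.choose 2 := by
  set T := Finset.univ.filter (fun S : Finset (Vtx n) => S.card = k) with hT
  have hset : {ω | ∃ S : Finset (Vtx n), S.card = k ∧ (Gn n ω).IsClique (S : Set (Vtx n))} =
      ⋃ S ∈ T, {ω | (Gn n ω).IsClique (S : Set (Vtx n))} := by
    ext ω
    simp [hT, Set.mem_iUnion, and_comm]
  rw [hset]
  calc Pn n (⋃ S ∈ T, {ω | (Gn n ω).IsClique (S : Set (Vtx n))})
      ≤ ∑ S ∈ T, Pn n {ω | (Gn n ω).IsClique (S : Set (Vtx n))} :=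
        measure_biUnion_finset_le T _
    _ ≤ ∑ S ∈ T, (3 / 4 : ℝ≥0∞) ^ k.choose 2 := by
        apply Finset.sum_le_sum
        intro S hS
        have hSk : S.card = k := (Finset.mem_filter.1 hS).2
        exact hSk ▸ clique_bound n S
    _ = (T.card : ℝ≥0∞) * (3 / 4 : ℝ≥0∞) ^ k.choose 2 := by
        rw [Finset.sum_const, nsmul_eq_mul]
    _ ≤ ((2 * n).choose k : ℝ≥0∞) * (3 / 4 : ℝ≥0∞) ^ k.choose 2 := by
        apply mul_le_mul_left
        have : T.card = (Fintype.card (Vtx n)).choose k := by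
          rw [hT, ← Fintype.card_finset_len, Fintype.card_subtype]
        rw [this]
        have : Fintype.card (Vtx n) = 2 * n := by
          simp [Fintype.card_prod, mul_comm]
        rw [this]
end

section
/- Let S be a family of k pairwise disjoint two-element subsets of {a_1,…,a_n, b_1,…,b_n} such that no member of S equals {a_i, b_i} for any i. Then there is a subfamily S' ⊆ S with |S'| ≥ k/3 such that the union of the members of S' contains at most one vertex from each pair {a_i, b_i}. -/
/-- Let `S` be a family of `k` pairwise disjoint two-element subsets of
`{a_1, …, a_n, b_1, …, b_n}` such that no member of `S` equals `{a_i, b_i}` for any `i`.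
Then there is a subfamily `S' ⊆ S` with `|S'| ≥ k / 3` whose union contains at most one
vertex from each pair `{a_i, b_i}`. -/
theorem statement16 (n k : ℕ) (S : Finset (Finset (Vtx n)))
    (hk : S.card = k)
    (hsize : ∀ P ∈ S, P.card = 2)
    (hdisj : (S : Set (Finset (Vtx n))).Pairwise fun P Q => Disjoint P Q)
    (hne : ∀ P ∈ S, ∀ i : Fin n, P ≠ {(i, false), (i, true)}) :
    ∃ S' : Finset (Finset (Vtx n)), S' ⊆ S ∧ (k : ℝ) / 3 ≤ (S'.card : ℝ) ∧
      ∀ i : Fin n, ¬ ((i, false) ∈ S'.biUnion id ∧ (i, true) ∈ S'.biUnion id) := by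
  classical
  induction k using Nat.strong_induction_on generalizing S with
  | _ k ih =>
  rcases Nat.eq_zero_or_pos k with hk0 | hkpos
  · refine ⟨∅, by simp, by simp [hk0], by simp⟩
  · -- pick some P ∈ S
    have hSne : S.Nonempty := by
      rw [← Finset.card_pos, hk]; exact hkpos
    obtain ⟨P, hP⟩ := hSne
    set bad : Finset (Finset (Vtx n)) :=
      S.filter (fun Q => ∃ v ∈ P, (v.1, !v.2) ∈ Q) with hbad
    have hbadcard : bad.card ≤ 2 := by
      have hsub : bad ⊆ P.biUnion (fun v => S.filter (fun Q => (v.1, !v.2) ∈ Q)) := by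
        intro Q hQ
        rw [hbad, Finset.mem_filter] at hQ
        obtain ⟨hQS, v, hv, hv2⟩ := hQ
        exact Finset.mem_biUnion.2 ⟨v, hv, Finset.mem_filter.2 ⟨hQS, hv2⟩⟩
      calc bad.card ≤ _ := Finset.card_le_card hsub
        _ ≤ ∑ v ∈ P, (S.filter (fun Q => (v.1, !v.2) ∈ Q)).card :=
            Finset.card_biUnion_le
        _ ≤ ∑ v ∈ P, 1 := by
            apply Finset.sum_le_sum
            intro v _
            apply Finset.card_le_one.2
            intro Q hQ R hR
            rw [Finset.mem_filter] at hQ hR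
            by_contra hne'
            have hd : Disjoint Q R := hdisj hQ.1 hR.1 hne'
            exact Finset.disjoint_left.1 hd hQ.2 hR.2
        _ = 2 := by simp [hsize P hP]
    set S₀ : Finset (Finset (Vtx n)) := (S.erase P) \ bad with hS₀
    have hS₀sub : S₀ ⊆ S := (Finset.sdiff_subset).trans (Finset.erase_subset _ _)
    have hS₀lt : S₀.card < k := by
      rw [← hk]
      exact lt_of_le_of_lt (Finset.card_le_card Finset.sdiff_subset)
        (Finset.card_erase_lt_of_mem hP)
    have hS₀ge : k - 3 ≤ S₀.card := by
      have h1 : (S.erase P).card - bad.card ≤ S₀.card := Finset.le_card_sdiff _ _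
      have h2 : (S.erase P).card = k - 1 := by rw [Finset.card_erase_of_mem hP, hk]
      omega
    obtain ⟨S'', hS''sub, hS''card, hS''ind⟩ :=
      ih S₀.card hS₀lt S₀ rfl (fun Q hQ => hsize Q (hS₀sub hQ))
        (hdisj.mono (by exact_mod_cast hS₀sub))
        (fun Q hQ => hne Q (hS₀sub hQ))
    have hPnot : P ∉ S'' := by
      intro h
      exact Finset.notMem_erase P S (Finset.mem_sdiff.1 (hS''sub h)).1
    refine ⟨insert P S'', ?_, ?_, ?_⟩
    · exact Finset.insert_subset hP (hS''sub.trans hS₀sub)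
    · rw [Finset.card_insert_of_notMem hPnot]
      have hn : k ≤ S₀.card + 3 := by omega
      have hcast : (k : ℝ) ≤ (S₀.card : ℝ) + 3 := by exact_mod_cast hn
      push_cast
      linarith
    · rintro i ⟨hf, ht⟩
      rw [Finset.mem_biUnion] at hf ht
      obtain ⟨Qf, hQf, hvf⟩ := hf
      obtain ⟨Qt, hQt, hvt⟩ := ht
      simp only [Finset.mem_insert, id] at hQf hQt hvf hvt
      have key : ∀ Q ∈ S'', ∀ v ∈ P, (v.1, !v.2) ∉ Q := by
        intro Q hQ v hv hcon
        have : Q ∈ bad := Finset.mem_filter.2 ⟨hS₀sub (hS''sub hQ), v, hv, hcon⟩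
        exact (Finset.mem_sdiff.1 (hS''sub hQ)).2 this
      rcases hQf with hQf | hQf <;> rcases hQt with hQt | hQt
      · -- both in P : P = {a_i, b_i}
        rw [hQf] at hvf; rw [hQt] at hvt
        have hsubP : ({(i, false), (i, true)} : Finset (Vtx n)) ⊆ P := by
          intro x hx
          simp only [Finset.mem_insert, Finset.mem_singleton] at hx
          rcases hx with rfl | rfl <;> assumption
        have hc : ({(i, false), (i, true)} : Finset (Vtx n)).card = 2 := by
          rw [Finset.card_insert_of_notMem (by simp), Finset.card_singleton]
        exact hne P hP i
          (Finset.eq_of_subset_of_card_le hsubP (by rw [hc, hsize P hP])).symm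
      · rw [hQf] at hvf
        exact key Qt hQt (i, false) hvf hvt
      · rw [hQt] at hvt
        exact key Qf hQf (i, true) hvt hvf
      · exact hS''ind i ⟨Finset.mem_biUnion.2 ⟨Qf, hQf, hvf⟩,
          Finset.mem_biUnion.2 ⟨Qt, hQt, hvt⟩⟩
end

section
/- The probability that the random graph G_n contains four distinct indices i, j, k, ℓ such that none of the pairs a_i b_j, a_j b_k, a_k b_ℓ, a_ℓ b_i is an edge tends to 1 as n tends to infinity. -/
open MeasureTheory
open scoped ENNReal

/-- relative positions of the four pairs within a block -/
def pr : Fin 4 → ℕ × ℕ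
  | 0 => (0, 1)
  | 1 => (1, 2)
  | 2 => (2, 3)
  | 3 => (0, 3)

lemma pr_lt (t : Fin 4) : (pr t).1 < (pr t).2 := by fin_cases t <;> decide

lemma pr_le (t : Fin 4) : (pr t).2 ≤ 3 := by fin_cases t <;> decide

lemma block_lt (n : ℕ) (m : Fin (n / 4)) {r : ℕ} (hr : r ≤ 3) : 4 * m.1 + r < n := by
  have h1 : m.1 < n / 4 := m.2
  have h2 : n / 4 * 4 ≤ n := Nat.div_mul_le_self n 4
  omega

/-- the coordinates of the `m`-th block -/
def coords (n : ℕ) (m : Fin (n / 4)) (t : Fin 4) : PairIdx n :=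
  ⟨(⟨4 * m.1 + (pr t).1, block_lt n m ((pr_lt t).le.trans (pr_le t))⟩,
    ⟨4 * m.1 + (pr t).2, block_lt n m (pr_le t)⟩),
    by simpa [Fin.lt_def] using pr_lt t⟩

lemma coords_injective (n : ℕ) :
    Function.Injective (fun p : Fin (n / 4) × Fin 4 => coords n p.1 p.2) := by
  rintro ⟨m, t⟩ ⟨m', t'⟩ h
  simp only at h
  have h1 : 4 * m.1 + (pr t).1 = 4 * m'.1 + (pr t').1 :=
    congrArg (fun p : PairIdx n => p.1.1.1) h
  have h2 : 4 * m.1 + (pr t).2 = 4 * m'.1 + (pr t').2 :=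
    congrArg (fun p : PairIdx n => p.1.2.1) h
  have hm : m.1 = m'.1 ∧ t = t' := by
    fin_cases t <;> fin_cases t' <;> simp [pr] at h1 h2 <;> omega
  exact Prod.ext (Fin.ext hm.1) hm.2

/-- the excluded-pair values we want within a block -/
def vals : Fin 4 → Fin 4 := ![1, 1, 1, 2]

/-- generic counting bound -/
lemma aux_count {ι : Type*} [Fintype ι] [DecidableEq ι] (k : ℕ) (c : Fin k × Fin 4 → ι)
    (hc : Function.Injective c) (v : Fin 4 → Fin 4) :
    Fintype.card {f : ι → Fin 4 // ∀ m : Fin k, ¬ ∀ t : Fin 4, f (c (m, t)) = v t}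
      ≤ 255 ^ k * 4 ^ (Fintype.card ι - 4 * k) := by
  classical
  have key : Fintype.card {f : ι → Fin 4 // ∀ m : Fin k, ¬ ∀ t : Fin 4, f (c (m, t)) = v t}
      ≤ Fintype.card ((Fin k → {w : Fin 4 → Fin 4 // w ≠ v}) ×
          ({x : ι // x ∉ Set.range c} → Fin 4)) := by
    apply Fintype.card_le_of_injective
      (fun f => (fun m => ⟨fun t => f.1 (c (m, t)), fun h => f.2 m fun t => congrFun h t⟩,
        fun x => f.1 x.1))
    rintro ⟨f, hf⟩ ⟨g, hg⟩ h
    simp only [Prod.mk.injEq] at h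
    apply Subtype.ext
    funext x
    by_cases hx : x ∈ Set.range c
    · obtain ⟨⟨m, t⟩, rfl⟩ := hx
      exact congrFun (congrArg Subtype.val (congrFun h.1 m)) t
    · exact congrFun h.2 ⟨x, hx⟩
  refine key.trans_eq ?_
  rw [Fintype.card_prod, Fintype.card_fun, Fintype.card_fun]
  have h1 : Fintype.card {w : Fin 4 → Fin 4 // w ≠ v} = 255 := by
    have := Fintype.card_subtype_compl (fun w : Fin 4 → Fin 4 => w = v)
    rw [this, Fintype.card_subtype_eq, Fintype.card_fun]
    simp
  have h2 : Fintype.card {x : ι // x ∉ Set.range c} = Fintype.card ι - 4 * k := by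
    have := Fintype.card_subtype_compl (fun x : ι => x ∈ Set.range c)
    rw [this]
    congr 1
    have e : Fintype.card {x : ι // x ∈ Set.range c} = Fintype.card (Set.range c) :=
      Fintype.card_congr (Equiv.refl _)
    rw [e, Set.card_range_of_injective hc, Fintype.card_prod, Fintype.card_fin,
      Fintype.card_fin, Nat.mul_comm]
  rw [h1, h2]
  simp

theorem test : True := trivial

/-- the "bad" event: no block realizes the wanted pattern -/
def badSet (n : ℕ) : Set (Omega n) :=
  {ω | ∀ m : Fin (n / 4), ¬ ∀ t : Fin 4, ω (coords n m t) = (![1, 1, 1, 2] : Fin 4 → Fin 4) t}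

lemma measurableSet_all {n : ℕ} (s : Set (Omega n)) : MeasurableSet s :=
  MeasurableSpace.measurableSet_top

lemma Pn_badSet_le (n : ℕ) :
    Pn n (badSet n) ≤ ((255 : ℝ≥0∞) / 256) ^ (n / 4) := by
  classical
  set k := n / 4 with hk
  set N := Fintype.card (PairIdx n) with hN
  have hkN : 4 * k ≤ N := by
    have := Fintype.card_le_of_injective _ (coords_injective n)
    simp only [Fintype.card_prod, Fintype.card_fin] at this
    omega
  have hcard : Fintype.card (badSet n) ≤ 255 ^ k * 4 ^ (N - 4 * k) := by
    have e : Fintype.card (badSet n) =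
        Fintype.card {f : Omega n // ∀ m : Fin k,
          ¬ ∀ t : Fin 4, f ((fun p : Fin k × Fin 4 => coords n p.1 p.2) (m, t))
            = (![1, 1, 1, 2] : Fin 4 → Fin 4) t} :=
      Fintype.card_congr (Equiv.refl _)
    rw [e]
    exact aux_count k _ (coords_injective n) _
  have hmeas : Pn n (badSet n) =
      (Fintype.card (badSet n) : ℝ≥0∞) / Fintype.card (Omega n) := by
    rw [Pn, PMF.toMeasure_uniformOfFintype_apply _ (measurableSet_all _)]
  have hcardO : (Fintype.card (Omega n) : ℝ≥0∞) = 4 ^ N := by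
    rw [Fintype.card_fun]
    push_cast
    simp [hN]
  rw [hmeas, hcardO]
  have step1 : (Fintype.card (badSet n) : ℝ≥0∞) / 4 ^ N
      ≤ ((255 : ℝ≥0∞) ^ k * 4 ^ (N - 4 * k)) / 4 ^ N := by
    apply ENNReal.div_le_div_right
    calc (Fintype.card (badSet n) : ℝ≥0∞)
        ≤ ((255 ^ k * 4 ^ (N - 4 * k) : ℕ) : ℝ≥0∞) := Nat.cast_le.2 hcard
      _ = (255 : ℝ≥0∞) ^ k * 4 ^ (N - 4 * k) := by push_cast; ring
  refine step1.trans_eq ?_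
  have h4N : (4 : ℝ≥0∞) ^ N = 256 ^ k * 4 ^ (N - 4 * k) := by
    rw [show (256 : ℝ≥0∞) = 4 ^ 4 by norm_num, ← pow_mul, ← pow_add]
    congr 1
    omega
  rw [h4N, ENNReal.mul_div_mul_right _ _ (by positivity) (by simp [ENNReal.pow_ne_top]),
    div_eq_mul_inv, ENNReal.inv_pow, ← mul_pow, ← div_eq_mul_inv]

lemma exists_of_not_bad (n : ℕ) (ω : Omega n) (hω : ω ∉ badSet n) :
    ∃ i j k l : Fin n,
      i ≠ j ∧ i ≠ k ∧ i ≠ l ∧ j ≠ k ∧ j ≠ l ∧ k ≠ l ∧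
      ¬ (Gn n ω).Adj (i, false) (j, true) ∧
      ¬ (Gn n ω).Adj (j, false) (k, true) ∧
      ¬ (Gn n ω).Adj (k, false) (l, true) ∧
      ¬ (Gn n ω).Adj (l, false) (i, true) := by
  simp only [badSet, Set.mem_setOf_eq] at hω
  push_neg at hω
  obtain ⟨m, hm⟩ := hω
  refine ⟨⟨4 * m.1 + 0, block_lt n m (by norm_num)⟩, ⟨4 * m.1 + 1, block_lt n m (by norm_num)⟩,
    ⟨4 * m.1 + 2, block_lt n m (by norm_num)⟩, ⟨4 * m.1 + 3, block_lt n m (by norm_num)⟩,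
    ?_, ?_, ?_, ?_, ?_, ?_, ?_, ?_, ?_, ?_⟩
  · simp [Fin.ext_iff]
  · simp [Fin.ext_iff]
  · simp [Fin.ext_iff]
  · simp [Fin.ext_iff]
  · simp [Fin.ext_iff]
  · simp [Fin.ext_iff]
  · rintro (⟨h, hne⟩ | ⟨h, _⟩)
    · exact hne (by simpa [coords, pr, code] using hm 0)
    · simp [Fin.lt_def] at h
  · rintro (⟨h, hne⟩ | ⟨h, _⟩)
    · exact hne (by simpa [coords, pr, code] using hm 1)
    · simp [Fin.lt_def] at h
  · rintro (⟨h, hne⟩ | ⟨h, _⟩)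
    · exact hne (by simpa [coords, pr, code] using hm 2)
    · simp [Fin.lt_def] at h
  · rintro (⟨h, _⟩ | ⟨h, hne⟩)
    · simp [Fin.lt_def] at h
    · exact hne (by simpa [coords, pr, code] using hm 3)

instance (n : ℕ) : IsProbabilityMeasure (Pn n) :=
  PMF.toMeasure.isProbabilityMeasure _

lemma lower_bound (n : ℕ) (S : Set (Omega n)) (hS : Sᶜ ⊆ badSet n) :
    1 - ((255 : ℝ≥0∞) / 256) ^ (n / 4) ≤ Pn n S := by
  have h1 : Pn n Sᶜ ≤ ((255 : ℝ≥0∞) / 256) ^ (n / 4) :=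
    le_trans (measure_mono hS) (Pn_badSet_le n)
  have h2 : Pn n S = 1 - Pn n Sᶜ := by
    conv_lhs => rw [← compl_compl S]
    rw [prob_compl_eq_one_sub (measurableSet_all _)]
  rw [h2]
  exact tsub_le_tsub_left h1 1

open Filter in
/-- The probability that the random graph `G_n` contains four distinct indices
`i, j, k, ℓ` such that none of the pairs `a_i b_j, a_j b_k, a_k b_ℓ, a_ℓ b_i` is an edge
tends to `1` as `n → ∞`. -/
theorem statement18 :
    Tendsto
      (fun n => Pn n {ω | ∃ i j k l : Fin n,
        i ≠ j ∧ i ≠ k ∧ i ≠ l ∧ j ≠ k ∧ j ≠ l ∧ k ≠ l ∧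
        ¬ (Gn n ω).Adj (i, false) (j, true) ∧
        ¬ (Gn n ω).Adj (j, false) (k, true) ∧
        ¬ (Gn n ω).Adj (k, false) (l, true) ∧
        ¬ (Gn n ω).Adj (l, false) (i, true)})
      atTop (nhds (1 : ℝ≥0∞)) := by
  refine tendsto_of_tendsto_of_tendsto_of_le_of_le
    (g := fun n : ℕ => 1 - ((255 : ℝ≥0∞) / 256) ^ (n / 4)) (h := fun _ => (1 : ℝ≥0∞))
    ?_ tendsto_const_nhds ?_ ?_
  · have hr : (255 : ℝ≥0∞) / 256 < 1 := by
      rw [ENNReal.div_lt_iff (Or.inl (by norm_num)) (Or.inl (by norm_num))]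
      norm_num
    have ha : Tendsto (fun n : ℕ => ((255 : ℝ≥0∞) / 256) ^ (n / 4)) atTop (nhds 0) :=
      (ENNReal.tendsto_pow_atTop_nhds_zero_of_lt_one hr).comp
        (tendsto_atTop_atTop.2 fun b =>
          ⟨4 * b, fun n hn => (Nat.le_div_iff_mul_le (by norm_num)).2 (by omega)⟩)
    simpa using ENNReal.Tendsto.sub (tendsto_const_nhds (x := (1 : ℝ≥0∞))) ha
      (Or.inl ENNReal.one_ne_top)
  · intro n
    refine lower_bound n _ (fun ω hω => ?_)
    by_contra hb
    exact hω (exists_of_not_bad n ω hb)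
  · exact fun n => prob_le_one
end
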